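/- arXiv:1802.03209 — 5 statements merged into one kernel-verified Lean document; each statement's English description precedes it below -/
import Mathlib

section
/- Let (X_t)_{t≥0} be a sequence of real-valued random variables adapted to a filtration (F_t)_{t≥0} with X_0 = x_0 ∈ ℝ almost surely, and let β < x_0. Suppose there exist constants A, B > 0 such that the truncated process (Y^A_t) is integrable for every t (E[|Y^A_t|] < ∞) and almost surely E[max{X_{t+1} − X_t, −A} | F_t] ≤ −B for every t. Then the first hitting times satisfy E[T^X_β] ≤ E[T^{Y^A}_β] ≤ (x_0 − β + A)/B. -/
open MeasureTheory ProbabilityTheory Real Set Filter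
open scoped ENNReal ENat

/-- First hitting time of the set `(-∞, β]` by the process `X`, valued in `ℕ∞`. -/
noncomputable def hitTime {Ω : Type*} (X : ℕ → Ω → ℝ) (β : ℝ) (ω : Ω) : ℕ∞ :=
  ⨅ k : {k : ℕ // X k ω ≤ β}, (k : ℕ∞)

/-- Truncated process: `Y^A_0 = X_0` and `Y^A_{t+1} = Y^A_t + max (X_{t+1} - X_t) (-A)`. -/
noncomputable def truncY {Ω : Type*} (A : ℝ) (X : ℕ → Ω → ℝ) : ℕ → Ω → ℝ
  | 0 => X 0
  | (t+1) => fun ω => truncY A X t ω + max (X (t+1) ω - X t ω) (-A)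

private lemma enat_tsum_aux (n : ℕ∞) :
    (n : ℝ≥0∞) = ∑' t : ℕ, if (t : ℕ∞) < n then (1:ℝ≥0∞) else 0 := by
  cases n with
  | top =>
      simp only [ENat.toENNReal_top]
      rw [show (fun t : ℕ => if (t : ℕ∞) < ⊤ then (1:ℝ≥0∞) else 0) = fun _ => 1 by
        funext t; simp [lt_top_iff_ne_top]]
      exact (ENNReal.tsum_const_eq_top_of_ne_zero one_ne_zero).symm
  | coe m =>
      rw [tsum_eq_sum (s := Finset.range m) (by
        intro t ht
        simp only [Finset.mem_range, not_lt] at ht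
        rw [if_neg (by exact_mod_cast not_lt.mpr ht)])]
      rw [Finset.sum_ite_of_true (by
        intro t ht
        simp only [Finset.mem_range] at ht
        exact_mod_cast ht)]
      simp

/-- Upper bound on the expected hitting time via drift on the truncated process. -/
theorem drift_upper_bound_truncated
    {Ω : Type*} {m0 : MeasurableSpace Ω} (μ : Measure Ω) [IsProbabilityMeasure μ]
    (ℱ : Filtration ℕ m0) (X : ℕ → Ω → ℝ) (hadapted : Adapted ℱ X)
    (x₀ β : ℝ) (hX0 : ∀ᵐ ω ∂μ, X 0 ω = x₀) (hβ : β < x₀)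
    (A B : ℝ) (hA : 0 < A) (hB : 0 < B)
    (hint : ∀ t, Integrable (truncY A X t) μ)
    (hdrift : ∀ t, ∀ᵐ ω ∂μ,
      (μ[(fun ω => max (X (t+1) ω - X t ω) (-A)) | ℱ t]) ω ≤ -B) :
    (∫⁻ ω, (hitTime X β ω : ℝ≥0∞) ∂μ) ≤ ∫⁻ ω, (hitTime (truncY A X) β ω : ℝ≥0∞) ∂μ ∧
    (∫⁻ ω, (hitTime (truncY A X) β ω : ℝ≥0∞) ∂μ) ≤ ENNReal.ofReal ((x₀ - β + A) / B) := by
  classical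
  set Y : ℕ → Ω → ℝ := truncY A X with hYdef
  set D : ℕ → Ω → ℝ := fun t ω => max (X (t+1) ω - X t ω) (-A) with hDdef
  have hYsucc : ∀ t ω, Y (t+1) ω = Y t ω + D t ω := fun t ω => rfl
  -- pointwise X ≤ Y
  have hXY : ∀ t ω, X t ω ≤ Y t ω := by
    intro t
    induction t with
    | zero => intro ω; exact le_refl _
    | succ t ih =>
        intro ω
        have h1 := ih ω
        have h2 : X (t+1) ω - X t ω ≤ D t ω := le_max_left _ _
        have : Y (t+1) ω = Y t ω + D t ω := hYsucc t ω
        rw [this]; linarith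
  -- part 1
  have part1 : (∫⁻ ω, (hitTime X β ω : ℝ≥0∞) ∂μ) ≤
      ∫⁻ ω, (hitTime Y β ω : ℝ≥0∞) ∂μ := by
    refine lintegral_mono fun ω => ?_
    rw [ENat.toENNReal_le]
    refine le_iInf fun k => ?_
    exact iInf_le_of_le ⟨k.1, le_trans (hXY k.1 ω) k.2⟩ le_rfl
  refine ⟨part1, ?_⟩
  -- measurability of Y
  have hYsm : ∀ t, StronglyMeasurable[ℱ t] (Y t) := by
    intro t
    induction t with
    | zero => exact (hadapted 0).stronglyMeasurable
    | succ t ih =>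
        have h1 : StronglyMeasurable[ℱ (t+1)] (Y t) := ih.mono (ℱ.mono t.le_succ)
        have h2 : StronglyMeasurable[ℱ (t+1)] (D t) := by
          have hsub : StronglyMeasurable[ℱ (t+1)] (fun ω => X (t+1) ω - X t ω) :=
            (hadapted (t+1)).stronglyMeasurable.sub ((hadapted t).stronglyMeasurable.mono (ℱ.mono t.le_succ))
          have hc : StronglyMeasurable[ℱ (t+1)] (fun _ : Ω => -A) := stronglyMeasurable_const
          exact @StronglyMeasurable.sup Ω ℝ _ _ (ℱ (t+1)) _ _ _ hsub hc
        exact h1.add h2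
  -- the "still running" sets
  set S : ℕ → Set Ω := fun t => {ω | ∀ s ≤ t, β < Y s ω} with hSdef
  have hSm : ∀ t, MeasurableSet[ℱ t] (S t) := by
    intro t
    have hrw : S t = ⋂ s ∈ Finset.Iic t, {ω | β < Y s ω} := by
      ext ω; simp [hSdef]
    rw [hrw]
    refine Finset.measurableSet_biInter _ fun s hs => ?_
    exact measurableSet_lt measurable_const
      (((hYsm s).mono (ℱ.mono (Finset.mem_Iic.mp hs))).measurable)
  have hSm0 : ∀ t, MeasurableSet (S t) := fun t => ℱ.le t _ (hSm t)
  have hSmono : ∀ t, S (t+1) ⊆ S t := by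
    intro t ω hω s hs; exact hω s (hs.trans t.le_succ)
  -- relation with hit time
  have hhit : ∀ (t : ℕ) (ω : Ω), (t : ℕ∞) < hitTime Y β ω ↔ ω ∈ S t := by
    intro t ω
    constructor
    · intro h s hs
      by_contra hc
      push_neg at hc
      have h1 : hitTime Y β ω ≤ s := iInf_le_of_le ⟨s, hc⟩ le_rfl
      have h2 : (s : ℕ∞) ≤ t := by exact_mod_cast hs
      exact absurd (h1.trans h2) (not_le.mpr h)
    · intro h
      have h1 : ((t+1 : ℕ) : ℕ∞) ≤ hitTime Y β ω := by
        refine le_iInf fun k => ?_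
        have hk : t < k.1 := not_le.mp fun hle => absurd k.2 (not_le.mpr (h k.1 hle))
        exact_mod_cast Nat.succ_le_of_lt hk
      exact lt_of_lt_of_le (by exact_mod_cast Nat.lt_succ_self t) h1
  -- integrability of D
  have hDint : ∀ t, Integrable (D t) μ := by
    intro t
    have : D t = Y (t+1) - Y t := by funext ω; simp [hYsucc t ω]
    rw [this]
    exact (hint (t+1)).sub (hint t)
  -- stopped process
  set Z : ℕ → Ω → ℝ := fun t =>
    Nat.rec (Y 0) (fun t Zt ω => Zt ω + (S t).indicator (D t) ω) t with hZdef
  have hZsucc : ∀ t ω, Z (t+1) ω = Z t ω + (S t).indicator (D t) ω := fun t ω => rfl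
  have hZint : ∀ t, Integrable (Z t) μ := by
    intro t
    induction t with
    | zero => exact hint 0
    | succ t ih =>
        have : Z (t+1) = fun ω => Z t ω + (S t).indicator (D t) ω := rfl
        rw [this]
        exact ih.add ((hDint t).indicator (hSm0 t))
  -- pointwise lower bound on Z (on the event X 0 = x₀)
  have hZlb : ∀ ω, X 0 ω = x₀ → ∀ t, β - A ≤ Z t ω ∧ (ω ∈ S t → Z t ω = Y t ω) := by
    intro ω h0 t
    induction t with
    | zero =>
        constructor
        · have : Z 0 ω = X 0 ω := rfl
          rw [this, h0]; linarith
        · intro _; rfl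
    | succ t ih =>
        by_cases hω : ω ∈ S t
        · have hZY : Z t ω = Y t ω := ih.2 hω
          have hYβ : β < Y t ω := hω t le_rfl
          have hDA : -A ≤ D t ω := le_max_right _ _
          constructor
          · rw [hZsucc, indicator_of_mem hω, hZY]; linarith
          · intro _
            rw [hZsucc, indicator_of_mem hω, hZY, hYsucc]
        · constructor
          · rw [hZsucc, indicator_of_notMem hω, add_zero]; exact ih.1
          · intro hω1; exact absurd (hSmono t hω1) hω
  -- expectation recursion
  have hstep : ∀ t, ∫ ω, Z (t+1) ω ∂μ ≤ ∫ ω, Z t ω ∂μ - B * (μ (S t)).toReal := by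
    intro t
    have h1 : ∫ ω, Z (t+1) ω ∂μ = ∫ ω, Z t ω ∂μ + ∫ ω, (S t).indicator (D t) ω ∂μ := by
      have : (fun ω => Z (t+1) ω) = fun ω => Z t ω + (S t).indicator (D t) ω := rfl
      rw [this, integral_add (hZint t) ((hDint t).indicator (hSm0 t))]
    have h2 : ∫ ω, (S t).indicator (D t) ω ∂μ = ∫ ω in S t, D t ω ∂μ :=
      integral_indicator (hSm0 t)
    have h3 : ∫ ω in S t, D t ω ∂μ = ∫ ω in S t, (μ[D t | ℱ t]) ω ∂μ :=
      (setIntegral_condExp (ℱ.le t) (hDint t) (hSm t)).symm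
    have h4 : ∫ ω in S t, (μ[D t | ℱ t]) ω ∂μ ≤ ∫ ω in S t, (-B) ∂μ :=
      setIntegral_mono_ae integrable_condExp.integrableOn
        (integrable_const _).integrableOn (hdrift t)
    have h5 : ∫ ω in S t, (-B : ℝ) ∂μ = (μ (S t)).toReal * (-B) := by
      rw [setIntegral_const]; simp [smul_eq_mul]; left; rfl
    rw [h1, h2, h3]
    have := h4.trans_eq h5
    linarith
  have hEZ0 : ∫ ω, Z 0 ω ∂μ = x₀ := by
    have : ∫ ω, Z 0 ω ∂μ = ∫ ω, x₀ ∂μ := integral_congr_ae (by filter_upwards [hX0] with ω h; exact h)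
    rw [this, integral_const]; simp
  have hsum : ∀ n, ∫ ω, Z n ω ∂μ ≤ x₀ - B * ∑ t ∈ Finset.range n, (μ (S t)).toReal := by
    intro n
    induction n with
    | zero => simp [hEZ0]
    | succ n ih =>
        have := hstep n
        rw [Finset.sum_range_succ]
        linarith
  have hlb : ∀ n, β - A ≤ ∫ ω, Z n ω ∂μ := by
    intro n
    have : ∫ ω, (β - A : ℝ) ∂μ ≤ ∫ ω, Z n ω ∂μ := by
      refine integral_mono_ae (integrable_const _) (hZint n) ?_
      filter_upwards [hX0] with ω h0
      exact (hZlb ω h0 n).1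
    simpa using this
  -- finite sums bounded
  have hfin : ∀ n, ∑ t ∈ Finset.range n, (μ (S t)).toReal ≤ (x₀ - β + A) / B := by
    intro n
    have h1 := hsum n
    have h2 := hlb n
    rw [le_div_iff₀ hB]
    nlinarith
  -- rewrite lintegral as tsum
  have hrw : (∫⁻ ω, (hitTime Y β ω : ℝ≥0∞) ∂μ) = ∑' t : ℕ, μ (S t) := by
    have heq : ∀ ω, (hitTime Y β ω : ℝ≥0∞) = ∑' t : ℕ, (S t).indicator (fun _ => (1:ℝ≥0∞)) ω := by
      intro ω
      rw [enat_tsum_aux (hitTime Y β ω)]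
      congr 1
      funext t
      by_cases h : ω ∈ S t
      · rw [if_pos ((hhit t ω).mpr h), indicator_of_mem h]
      · rw [if_neg (fun hc => h ((hhit t ω).mp hc)), indicator_of_notMem h]
    calc (∫⁻ ω, (hitTime Y β ω : ℝ≥0∞) ∂μ)
        = ∫⁻ ω, ∑' t : ℕ, (S t).indicator (fun _ => (1:ℝ≥0∞)) ω ∂μ := by
          exact lintegral_congr heq
      _ = ∑' t : ℕ, ∫⁻ ω, (S t).indicator (fun _ => (1:ℝ≥0∞)) ω ∂μ :=
          lintegral_tsum fun t => ((measurable_const.indicator (hSm0 t))).aemeasurable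
      _ = ∑' t : ℕ, μ (S t) := by
          refine tsum_congr fun t => ?_
          exact lintegral_indicator_one (hSm0 t)
  rw [hrw]
  -- conclude
  rw [ENNReal.tsum_eq_iSup_sum]
  refine iSup_le fun s => ?_
  obtain ⟨n, hn⟩ : ∃ n, s ⊆ Finset.range n := ⟨(s.sup id) + 1, fun x hx =>
    Finset.mem_range.mpr (Nat.lt_succ_of_le (Finset.le_sup (f := id) hx))⟩
  have hle : ∑ t ∈ s, μ (S t) ≤ ∑ t ∈ Finset.range n, μ (S t) :=
    Finset.sum_le_sum_of_subset hn
  refine hle.trans ?_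
  have hne : ∑ t ∈ Finset.range n, μ (S t) ≠ ⊤ := by
    refine (lt_of_le_of_lt (Finset.sum_le_sum fun t _ => prob_le_one (μ := μ) (s := S t)) ?_).ne
    simp [ENNReal.sum_lt_top]
  rw [ENNReal.le_ofReal_iff_toReal_le hne (div_nonneg (by linarith) hB.le)]
  rw [ENNReal.toReal_sum fun t _ => (measure_ne_top μ (S t))]
  exact hfin n
end

section
/- Let (X_t)_{t≥0} be a sequence of integrable real-valued random variables adapted to a filtration (F_t)_{t≥0} such that X_0 = x_0 ∈ ℝ almost surely, X_{t+1} ≤ X_t almost surely for every t, and E[X_{t+1} | F_t] − X_t ≥ −C almost surely for every t, where C > 0. Then for every β < x_0 the first hitting time satisfies E[T^X_β] ≥ (x_0 − β)/(4C) − 1/2. -/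
open MeasureTheory ProbabilityTheory Real Set Filter
open scoped ENNReal ENat

lemma hitTime_ge_aux {Ω : Type*} {X : ℕ → Ω → ℝ} {β : ℝ} {ω : Ω}
    (hm : ∀ t, X (t + 1) ω ≤ X t ω) {m : ℕ} (h : β < X m ω) :
    ((m + 1 : ℕ) : ℕ∞) ≤ hitTime X β ω := by
  refine le_iInf fun k => ?_
  have hk : m < (k : ℕ) := by
    by_contra hk
    push_neg at hk
    have hA : Antitone (fun t => X t ω) := antitone_nat_of_succ_le hm
    have := hA hk
    have := k.2
    linarith
  exact_mod_cast hk

/-- Lower bound on the expected hitting time for a monotone process with bounded drift. -/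
theorem drift_lower_bound
    {Ω : Type*} {m0 : MeasurableSpace Ω} (μ : Measure Ω) [IsProbabilityMeasure μ]
    (ℱ : Filtration ℕ m0) (X : ℕ → Ω → ℝ) (hadapted : Adapted ℱ X)
    (hint : ∀ t, Integrable (X t) μ)
    (x₀ : ℝ) (hX0 : ∀ᵐ ω ∂μ, X 0 ω = x₀)
    (hmono : ∀ t, ∀ᵐ ω ∂μ, X (t+1) ω ≤ X t ω)
    (C : ℝ) (hC : 0 < C)
    (hdrift : ∀ t, ∀ᵐ ω ∂μ, (μ[X (t+1) | ℱ t]) ω - X t ω ≥ -C)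
    (β : ℝ) (hβ : β < x₀) :
    ENNReal.ofReal ((x₀ - β) / (4 * C) - 1/2) ≤ ∫⁻ ω, (hitTime X β ω : ℝ≥0∞) ∂μ := by
  set D := x₀ - β with hD
  have hD0 : 0 < D := sub_pos.2 hβ
  set r := D / (2 * C) with hr
  have hr0 : 0 < r := by positivity
  set N := ⌈r⌉₊ with hN
  have hN1 : 1 ≤ N := Nat.one_le_ceil_iff.2 hr0
  set m := N - 1 with hm
  have hNm : N = m + 1 := (Nat.succ_pred_eq_of_pos hN1).symm
  have hmr : (m : ℝ) < r := by
    have h1 : (N : ℝ) < r + 1 := Nat.ceil_lt_add_one hr0.le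
    have h2 : (m : ℝ) = (N : ℝ) - 1 := by rw [hNm]; push_cast; ring
    linarith
  -- the a.e. good set: global monotonicity and X 0 = x₀
  have hgood : ∀ᵐ ω ∂μ, (∀ t, X (t + 1) ω ≤ X t ω) ∧ X 0 ω = x₀ :=
    ((ae_all_iff.2 hmono).and hX0)
  -- expected value lower bound: x₀ - n*C ≤ ∫ X n
  have hEk : ∀ n : ℕ, x₀ - n * C ≤ ∫ ω, X n ω ∂μ := by
    intro n
    induction n with
    | zero =>
      rw [integral_congr_ae hX0]
      simp
    | succ n ih =>
      have hstep : ∫ ω, X n ω ∂μ - C ≤ ∫ ω, X (n + 1) ω ∂μ := by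
        have hcond : Integrable (μ[X (n+1) | ℱ n]) μ := integrable_condExp
        have h1 : ∫ ω, (fun _ => -C) ω ∂μ ≤ ∫ ω, ((μ[X (n+1) | ℱ n]) ω - X n ω) ∂μ :=
          integral_mono_ae (integrable_const _) (hcond.sub (hint n)) (hdrift n)
        rw [integral_const] at h1
        rw [integral_sub hcond (hint n), integral_condExp (ℱ.le n)] at h1
        simp at h1
        linarith
      push_cast
      linarith
  -- Markov bound at time m
  set s : Set Ω := {ω | X m ω ≤ β} with hs
  have hsmeas : MeasurableSet s :=
    measurableSet_le (((hadapted m).mono (ℱ.le m) le_rfl)) measurable_const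
  have hXm_le : ∀ᵐ ω ∂μ, 0 ≤ x₀ - X m ω := by
    filter_upwards [hgood] with ω ⟨hmo, h0⟩
    have hA : Antitone (fun t => X t ω) := antitone_nat_of_succ_le hmo
    have := hA (Nat.zero_le m)
    simp only at this
    linarith
  have hmarkov : D * (μ {ω | D ≤ x₀ - X m ω}).toReal ≤ ∫ ω, (x₀ - X m ω) ∂μ :=
    mul_meas_ge_le_integral_of_nonneg hXm_le ((integrable_const x₀).sub (hint m)) D
  have hseq : {ω | D ≤ x₀ - X m ω} = s := by
    ext ω; simp only [hs, mem_setOf_eq, hD]; constructor <;> intro h <;> linarith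
  have hintval : ∫ ω, (x₀ - X m ω) ∂μ ≤ m * C := by
    rw [integral_sub (integrable_const x₀) (hint m), integral_const]
    have := hEk m
    simp
    linarith
  have hμs : (μ s).toReal ≤ (m * C) / D := by
    rw [hseq] at hmarkov
    rw [le_div_iff₀ hD0]
    nlinarith [hmarkov, hintval]
  have hμs_half : μ s ≤ ENNReal.ofReal (1/2) := by
    rw [ENNReal.le_ofReal_iff_toReal_le (measure_ne_top μ s) (by norm_num)]
    have : (m : ℝ) * C / D ≤ 1 / 2 := by
      rw [div_le_div_iff₀ hD0 (by norm_num)]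
      have : (m : ℝ) * (2 * C) < r * (2 * C) := by
        apply mul_lt_mul_of_pos_right hmr; positivity
      rw [hr, div_mul_cancel₀] at this
      · linarith
      · positivity
    linarith
  have hμsc : ENNReal.ofReal (1/2) ≤ μ sᶜ := by
    have h1 : μ sᶜ = 1 - μ s := by
      rw [measure_compl hsmeas (measure_ne_top μ s), measure_univ]
    rw [h1]
    have h2 : ENNReal.ofReal (1/2) + ENNReal.ofReal (1/2) = 1 := by
      rw [← ENNReal.ofReal_add (by norm_num) (by norm_num)]
      norm_num
    calc ENNReal.ofReal (1/2) = 1 - ENNReal.ofReal (1/2) := by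
          rw [← h2]; rw [ENNReal.add_sub_cancel_right (by simp)]
      _ ≤ 1 - μ s := tsub_le_tsub_left hμs_half 1
  -- pointwise a.e. lower bound on hitting time
  have hpt : ∀ᵐ ω ∂μ, sᶜ.indicator (fun _ => (N : ℝ≥0∞)) ω ≤ (hitTime X β ω : ℝ≥0∞) := by
    filter_upwards [hgood] with ω ⟨hmo, _⟩
    by_cases hω : ω ∈ sᶜ
    · rw [Set.indicator_of_mem hω]
      have hβω : β < X m ω := by
        simp only [hs, Set.mem_compl_iff, mem_setOf_eq, not_le] at hω
        exact hω
      have h1 : ((m + 1 : ℕ) : ℕ∞) ≤ hitTime X β ω := hitTime_ge_aux hmo hβω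
      have h2 : (((m + 1 : ℕ) : ℕ∞) : ℝ≥0∞) ≤ (hitTime X β ω : ℝ≥0∞) := by
        exact_mod_cast h1
      rw [hNm]
      simpa using h2
    · rw [Set.indicator_of_notMem hω]
      exact zero_le
  calc ENNReal.ofReal (D / (4 * C) - 1/2)
      ≤ ENNReal.ofReal ((N : ℝ) * (1/2)) := by
        apply ENNReal.ofReal_le_ofReal
        have hrN : r ≤ (N : ℝ) := Nat.le_ceil r
        have : D / (4 * C) = r / 2 := by rw [hr]; ring
        rw [this]
        linarith
    _ = (N : ℝ≥0∞) * ENNReal.ofReal (1/2) := by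
        rw [ENNReal.ofReal_mul (by positivity), ENNReal.ofReal_natCast]
    _ ≤ (N : ℝ≥0∞) * μ sᶜ := by
        exact mul_le_mul_right hμsc _
    _ = ∫⁻ ω, sᶜ.indicator (fun _ => (N : ℝ≥0∞)) ω ∂μ := by
        rw [lintegral_indicator_const hsmeas.compl]
    _ ≤ ∫⁻ ω, (hitTime X β ω : ℝ≥0∞) ∂μ := lintegral_mono_ae hpt
end

section
/- For every dimension d ≥ 1, the map σ̄ ↦ p^succ_{0,d}(σ̄) is strictly monotonically decreasing on (0, ∞). -/
open MeasureTheory ProbabilityTheory Real Set Filter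
open scoped ENNReal

/-- The standard Gaussian measure `N(0, I_d)` on `ℝ^d`. -/
noncomputable def stdGaussian (d : ℕ) : Measure (EuclideanSpace ℝ (Fin d)) :=
  (Measure.pi (fun _ : Fin d => gaussianReal 0 1)).map
    (EuclideanSpace.equiv (Fin d) ℝ).symm

/-- The Gaussian measure `N(m, σ² I_d)` on `ℝ^d`. -/
noncomputable def gaussianVec (d : ℕ) (m : EuclideanSpace ℝ (Fin d)) (σ : ℝ) :
    Measure (EuclideanSpace ℝ (Fin d)) :=
  (stdGaussian d).map (fun z => m + σ • z)

/-- The first standard basis vector of `ℝ^d` (zero if `d = 0`). -/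
noncomputable def e1 (d : ℕ) : EuclideanSpace ℝ (Fin d) :=
  if h : 0 < d then EuclideanSpace.single ⟨0, h⟩ 1 else 0

/-- The success probability with rate `r` and normalized step size `σb`:
`Pr(‖e₁ + (σb/d)·N‖ < 1 - r)` for `N ∼ N(0, I_d)`. -/
noncomputable def psucc (d : ℕ) (r σb : ℝ) : ℝ :=
  ((stdGaussian d) {z | ‖e1 d + (σb / d) • z‖ < 1 - r}).toReal

lemma gaussianReal_isOpenPosMeasure : (gaussianReal 0 1).IsOpenPosMeasure := by
  refine ⟨fun U hU hne h => ?_⟩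
  rw [gaussianReal_apply 0 one_ne_zero U] at h
  rw [lintegral_eq_zero_iff (measurable_gaussianPDF 0 1)] at h
  have h2 : (volume.restrict U) {x | ¬ gaussianPDF 0 1 x = 0} = 0 := h
  have h3 : {x : ℝ | ¬ gaussianPDF 0 1 x = 0} = Set.univ := by
    ext x; simp only [Set.mem_setOf_eq, Set.mem_univ, iff_true]
    exact (ENNReal.ofReal_pos.2 (gaussianPDFReal_pos 0 1 x one_ne_zero)).ne'
  rw [h3, Measure.restrict_apply_univ] at h2
  exact (hU.measure_pos volume hne).ne' h2

lemma stdGaussian_isProbabilityMeasure (d : ℕ) : IsProbabilityMeasure (stdGaussian d) := by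
  unfold _root_.stdGaussian
  exact Measure.isProbabilityMeasure_map
    ((EuclideanSpace.equiv (Fin d) ℝ).symm.continuous.measurable.aemeasurable)

lemma stdGaussian_isOpenPosMeasure (d : ℕ) : (stdGaussian d).IsOpenPosMeasure := by
  haveI : ∀ _ : Fin d, (gaussianReal 0 1).IsOpenPosMeasure := fun _ => gaussianReal_isOpenPosMeasure
  haveI := gaussianReal_isOpenPosMeasure
  refine ⟨fun U hU hne => ?_⟩
  obtain ⟨x, hx⟩ := hne
  rw [_root_.stdGaussian, Measure.map_apply
    (EuclideanSpace.equiv (Fin d) ℝ).symm.continuous.measurable hU.measurableSet]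
  have hopen : IsOpen ((EuclideanSpace.equiv (Fin d) ℝ).symm ⁻¹' U) :=
    hU.preimage (EuclideanSpace.equiv (Fin d) ℝ).symm.continuous
  have hne' : ((EuclideanSpace.equiv (Fin d) ℝ).symm ⁻¹' U).Nonempty :=
    ⟨EuclideanSpace.equiv (Fin d) ℝ x, by simpa using hx⟩
  exact (hopen.measure_pos _ hne').ne'

lemma norm_e1 (d : ℕ) (hd : 0 < d) : ‖e1 d‖ = 1 := by
  rw [e1, dif_pos hd, EuclideanSpace.norm_single, norm_one]

lemma key_iff (d : ℕ) (hd : 0 < d) (t : ℝ) (ht : 0 < t) (z : EuclideanSpace ℝ (Fin d)) :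
    ‖e1 d + t • z‖ < 1 ↔ 2 * inner ℝ (e1 d) z + t * ‖z‖ ^ 2 < 0 := by
  have h1 : ‖e1 d + t • z‖ ^ 2 = 1 + t * (2 * inner ℝ (e1 d) z + t * ‖z‖ ^ 2) := by
    rw [norm_add_sq_real, real_inner_smul_right, norm_smul, norm_e1 d hd]
    rw [Real.norm_eq_abs, mul_pow, sq_abs]
    ring
  constructor
  · intro h
    have h2 : ‖e1 d + t • z‖ ^ 2 < 1 := by
      nlinarith [norm_nonneg (e1 d + t • z)]
    nlinarith
  · intro h
    have h2 : ‖e1 d + t • z‖ ^ 2 < 1 := by nlinarith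
    nlinarith [norm_nonneg (e1 d + t • z)]

/-- For `d ≥ 1`, the success probability `σ̄ ↦ p^succ_{0,d}(σ̄)` is strictly
monotonically decreasing on `(0, ∞)`. -/
theorem psucc_strictAnti (d : ℕ) (hd : 1 ≤ d) : StrictAntiOn (psucc d 0) (Set.Ioi 0) := by
  haveI := stdGaussian_isProbabilityMeasure d
  haveI := stdGaussian_isOpenPosMeasure d
  have hd0 : 0 < d := hd
  have hdR : (0:ℝ) < d := by exact_mod_cast hd0
  intro a ha b hb hab
  simp only [Set.mem_Ioi] at ha hb
  set a' : ℝ := a / d with ha'def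
  set b' : ℝ := b / d with hb'def
  have ha' : 0 < a' := div_pos ha hdR
  have hb' : 0 < b' := div_pos hb hdR
  have hab' : a' < b' := div_lt_div_of_pos_right hab hdR
  set μ := stdGaussian d
  set A : ℝ → Set (EuclideanSpace ℝ (Fin d)) := fun t => {z | ‖e1 d + t • z‖ < 1}
  have hAopen : ∀ t, IsOpen (A t) := by
    intro t
    exact isOpen_lt ((continuous_const.add (continuous_id.const_smul t)).norm) continuous_const
  -- inclusion
  have hsub : A b' ⊆ A a' := by
    intro z hz
    rw [Set.mem_setOf_eq, key_iff d hd0 b' hb'] at hz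
    rw [Set.mem_setOf_eq, key_iff d hd0 a' ha']
    nlinarith [sq_nonneg ‖z‖]
  -- the gap set
  set U : Set (EuclideanSpace ℝ (Fin d)) :=
    {z | 2 * inner ℝ (e1 d) z + a' * ‖z‖ ^ 2 < 0 ∧ 0 < 2 * inner ℝ (e1 d) z + b' * ‖z‖ ^ 2}
  have hcont : Continuous fun z : EuclideanSpace ℝ (Fin d) => (inner ℝ (e1 d) z : ℝ) :=
    continuous_inner.comp (continuous_const.prodMk continuous_id)
  have hg : ∀ t : ℝ, Continuous fun z : EuclideanSpace ℝ (Fin d) =>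
      2 * (inner ℝ (e1 d) z : ℝ) + t * ‖z‖ ^ 2 := fun t =>
    (continuous_const.mul hcont).add (continuous_const.mul (continuous_norm.pow 2))
  have hUopen : IsOpen U :=
    (isOpen_lt (hg a') continuous_const).inter (isOpen_lt continuous_const (hg b'))
  have hUne : U.Nonempty := by
    have hdd : 2 / b' < 2 / a' := by
      rw [div_lt_div_iff₀ hb' ha']; nlinarith
    obtain ⟨c, hc1, hc2⟩ := exists_between hdd
    have hc0 : 0 < c := lt_trans (div_pos two_pos hb') hc1
    refine ⟨(-c) • e1 d, ?_, ?_⟩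
    · have hi : (inner ℝ (e1 d) ((-c) • e1 d) : ℝ) = -c := by
        rw [real_inner_smul_right, real_inner_self_eq_norm_sq, norm_e1 d hd0]
        ring
      have hn : ‖(-c) • e1 d‖ ^ 2 = c ^ 2 := by
        rw [norm_smul, norm_e1 d hd0, Real.norm_eq_abs, mul_pow, sq_abs]
        ring
      show 2 * (inner ℝ (e1 d) ((-c) • e1 d) : ℝ) + a' * ‖(-c) • e1 d‖ ^ 2 < 0
      rw [hi, hn]
      have : a' * c < 2 := by
        have := (lt_div_iff₀ ha').1 hc2
        nlinarith
      nlinarith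
    · have hi : (inner ℝ (e1 d) ((-c) • e1 d) : ℝ) = -c := by
        rw [real_inner_smul_right, real_inner_self_eq_norm_sq, norm_e1 d hd0]
        ring
      have hn : ‖(-c) • e1 d‖ ^ 2 = c ^ 2 := by
        rw [norm_smul, norm_e1 d hd0, Real.norm_eq_abs, mul_pow, sq_abs]
        ring
      show 0 < 2 * (inner ℝ (e1 d) ((-c) • e1 d) : ℝ) + b' * ‖(-c) • e1 d‖ ^ 2
      rw [hi, hn]
      have : 2 < b' * c := by
        have := (div_lt_iff₀ hb').1 hc1
        nlinarith
      nlinarith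
  have hUsub : U ⊆ A a' \ A b' := by
    rintro z ⟨hz1, hz2⟩
    constructor
    · rw [Set.mem_setOf_eq, key_iff d hd0 a' ha']; exact hz1
    · rw [Set.mem_setOf_eq, key_iff d hd0 b' hb']; push_neg; linarith
  -- measures
  have hdisj : Disjoint (A b') U := by
    rw [Set.disjoint_left]
    intro z hz hzU
    exact (hUsub hzU).2 hz
  have hmeas : μ (A b') + μ U ≤ μ (A a') := by
    rw [← measure_union hdisj (hUopen.measurableSet)]
    apply measure_mono
    rw [Set.union_subset_iff]
    exact ⟨hsub, fun z hz => (hUsub hz).1⟩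
  have hUpos : 0 < μ U := hUopen.measure_pos μ hUne
  have hlt : μ (A b') < μ (A a') := by
    calc μ (A b') < μ (A b') + μ U := ENNReal.lt_add_right (measure_ne_top μ _) hUpos.ne'
    _ ≤ μ (A a') := hmeas
  have hre : ∀ t : ℝ, psucc d 0 t = (μ (A (t / d))).toReal := by
    intro t
    simp only [psucc, sub_zero]
    rfl
  rw [hre a, hre b]
  exact ENNReal.toReal_lt_toReal (measure_ne_top μ _) (measure_ne_top μ _) |>.2 hlt
end

section
/- For every dimension d ≥ 1, the image of the map σ̄ ↦ p^succ_{0,d}(σ̄) on (0, ∞) is exactly the open interval (0, 1/2); in particular, lim_{σ̄ → 0+} p^succ_{0,d}(σ̄) = 1/2 and lim_{σ̄ → ∞} p^succ_{0,d}(σ̄) = 0, and σ̄ ↦ p^succ_{0,d}(σ̄) is a bijection from (0,∞) onto (0, 1/2). -/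
open MeasureTheory ProbabilityTheory Real Set Filter
open scoped ENNReal

namespace PsuccAux

lemma pi_ac {n : ℕ} (μ ν : Fin n → Measure ℝ) [∀ i, SigmaFinite (μ i)]
    [∀ i, SigmaFinite (ν i)] (h : ∀ i, μ i ≪ ν i) :
    Measure.pi μ ≪ Measure.pi ν := by
  induction n with
  | zero => rw [Measure.pi_of_empty, Measure.pi_of_empty]
  | succ n ih =>
    set e := MeasurableEquiv.piFinSuccAbove (fun _ : Fin (n+1) => ℝ) 0 with he
    have h1 : MeasurePreserving e (Measure.pi μ)
        ((μ 0).prod <| Measure.pi fun j => μ ((0 : Fin (n+1)).succAbove j)) :=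
      measurePreserving_piFinSuccAbove μ 0
    have h2 : MeasurePreserving e (Measure.pi ν)
        ((ν 0).prod <| Measure.pi fun j => ν ((0 : Fin (n+1)).succAbove j)) :=
      measurePreserving_piFinSuccAbove ν 0
    have hprod : ((μ 0).prod <| Measure.pi fun j => μ ((0 : Fin (n+1)).succAbove j)) ≪
        ((ν 0).prod <| Measure.pi fun j => ν ((0 : Fin (n+1)).succAbove j)) :=
      Measure.AbsolutelyContinuous.prod (h 0)
        (ih (fun j => μ ((0 : Fin (n+1)).succAbove j)) (fun j => ν ((0 : Fin (n+1)).succAbove j))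
          (fun j => h _))
    have key : ∀ (m : Measure (Fin (n+1) → ℝ)) (p : Measure (ℝ × (Fin n → ℝ))),
        Measure.map (⇑e) m = p → m = Measure.map (⇑e.symm) p := by
      intro m p hp
      rw [← hp, Measure.map_map e.symm.measurable e.measurable]
      simp
    rw [key _ _ h1.map_eq, key _ _ h2.map_eq]
    exact hprod.map e.symm.measurable

lemma stdGaussian_eq (d : ℕ) : stdGaussian d = (Measure.pi (fun _ : Fin d => gaussianReal 0 1)).map
    (MeasurableEquiv.toLp 2 (Fin d → ℝ)) := rfl

instance (d : ℕ) : IsProbabilityMeasure (stdGaussian d) := by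
  rw [stdGaussian_eq]
  exact Measure.isProbabilityMeasure_map (MeasurableEquiv.toLp 2 (Fin d → ℝ)).measurable.aemeasurable

lemma stdGaussian_ac (d : ℕ) : stdGaussian d ≪ (volume : Measure (EuclideanSpace ℝ (Fin d))) := by
  rw [stdGaussian_eq,
    ← (MeasurePreserving.symm _ (EuclideanSpace.volume_preserving_symm_measurableEquiv_toLp (Fin d))).map_eq,
    volume_pi]
  exact (pi_ac _ _ (fun _ => gaussianReal_absolutelyContinuous 0 one_ne_zero)).map
    (MeasurableEquiv.toLp 2 (Fin d → ℝ)).measurable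

lemma volume_ac (d : ℕ) : (volume : Measure (EuclideanSpace ℝ (Fin d))) ≪ stdGaussian d := by
  rw [stdGaussian_eq,
    ← (MeasurePreserving.symm _ (EuclideanSpace.volume_preserving_symm_measurableEquiv_toLp (Fin d))).map_eq,
    volume_pi]
  exact (pi_ac _ _ (fun _ => gaussianReal_absolutelyContinuous' 0 one_ne_zero)).map
    (MeasurableEquiv.toLp 2 (Fin d → ℝ)).measurable

lemma gaussianPDFReal_le_one (x : ℝ) : gaussianPDFReal 0 1 x ≤ 1 := by
  rw [gaussianPDFReal]
  simp only [NNReal.coe_one, mul_one, sub_zero]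
  have h2 : (1:ℝ) ≤ Real.sqrt (2 * π) := by
    rw [show (1:ℝ) = Real.sqrt 1 by simp]
    exact Real.sqrt_le_sqrt (by nlinarith [Real.pi_gt_three])
  have h3 : (Real.sqrt (2 * π))⁻¹ ≤ 1 := inv_le_one_of_one_le₀ h2
  have h4 : Real.exp (-x ^ 2 / 2) ≤ 1 := by
    rw [Real.exp_le_one_iff]
    nlinarith [sq_nonneg x]
  nlinarith [Real.exp_pos (-x ^ 2 / 2), Real.sqrt_nonneg (2 * π)]


lemma gauss_Ioo_le (a b : ℝ) : gaussianReal 0 1 (Ioo a b) ≤ ENNReal.ofReal (b - a) := by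
  rw [gaussianReal_apply 0 one_ne_zero]
  calc ∫⁻ x in Ioo a b, gaussianPDF 0 1 x
      ≤ ∫⁻ _x in Ioo a b, 1 := by
        refine lintegral_mono fun x => ?_
        rw [gaussianPDF]
        exact ENNReal.ofReal_le_of_le_toReal (by simpa using gaussianPDFReal_le_one x)
    _ = volume (Ioo a b) := by simp
    _ = ENNReal.ofReal (b - a) := by rw [Real.volume_Ioo]

lemma gauss_singleton (x : ℝ) : gaussianReal 0 1 {x} = 0 :=
  gaussianReal_absolutelyContinuous 0 one_ne_zero (volume_singleton)

lemma gauss_Iio_zero : gaussianReal 0 1 (Iio 0) = 1/2 := by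
  have hone : (⟨(-1:ℝ)^2, sq_nonneg _⟩ : NNReal) * 1 = 1 := by ext; norm_num
  have hmap : (gaussianReal 0 1).map (fun x => (-1 : ℝ) * x) = gaussianReal 0 1 := by
    rw [gaussianReal_map_const_mul (-1 : ℝ), show ((-1:ℝ) * 0) = 0 by norm_num]
    congr 1
  have hIoi : gaussianReal 0 1 (Ioi 0) = gaussianReal 0 1 (Iio 0) := by
    conv_lhs => rw [← hmap]
    rw [Measure.map_apply (by fun_prop) measurableSet_Ioi]
    congr 1
    ext x
    simp [neg_pos]
  have hIci : gaussianReal 0 1 (Ici (0:ℝ)) = gaussianReal 0 1 (Ioi 0) := by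
    have hset : Ici (0:ℝ) = {0} ∪ Ioi 0 := by
      ext x
      simp [le_iff_lt_or_eq, eq_comm, or_comm]
    rw [hset, measure_union (by simp) measurableSet_Ioi, gauss_singleton, zero_add]
  have hsum : gaussianReal 0 1 (Iio 0) + gaussianReal 0 1 (Ici 0) = 1 := by
    rw [← measure_union (Iio_disjoint_Ici le_rfl) measurableSet_Ici, Iio_union_Ici,
      measure_univ]
  rw [hIci, hIoi] at hsum
  have ha : gaussianReal 0 1 (Iio 0) ≠ ⊤ := measure_ne_top _ _
  have h2 : (gaussianReal 0 1 (Iio 0)).toReal + (gaussianReal 0 1 (Iio 0)).toReal = 1 := by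
    rw [← ENNReal.toReal_add ha ha, hsum]
    simp
  have h3 : (gaussianReal 0 1 (Iio 0)).toReal = 1/2 := by linarith
  rw [← ENNReal.ofReal_toReal ha, h3]
  rw [ENNReal.ofReal_div_of_pos (by norm_num)]
  norm_num

lemma measurable_coord (d : ℕ) (i : Fin d) :
    Measurable (fun z : EuclideanSpace ℝ (Fin d) => z i) :=
  (measurable_pi_apply i).comp (MeasurableEquiv.toLp 2 (Fin d → ℝ)).symm.measurable

lemma stdGaussian_cyl (d : ℕ) (h0 : 0 < d) (s : Set ℝ) (hs : MeasurableSet s) :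
    stdGaussian d {z | z ⟨0, h0⟩ ∈ s} = gaussianReal 0 1 s := by
  have hmeas : MeasurableSet {z : EuclideanSpace ℝ (Fin d) | z ⟨0, h0⟩ ∈ s} :=
    (measurable_coord d ⟨0, h0⟩) hs
  rw [stdGaussian_eq, Measure.map_apply (MeasurableEquiv.measurable _) hmeas]
  have hpre : (⇑(MeasurableEquiv.toLp 2 (Fin d → ℝ))) ⁻¹' {z | z ⟨0, h0⟩ ∈ s}
      = Set.univ.pi (fun i => if i = (⟨0, h0⟩ : Fin d) then s else univ) := by
    ext x
    simp only [Set.mem_preimage, Set.mem_setOf_eq, Set.mem_univ_pi]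
    constructor
    · intro h i
      by_cases hi : i = ⟨0, h0⟩
      · subst hi; simpa using h
      · simp [hi]
    · intro h
      have := h ⟨0, h0⟩
      simpa using this
  rw [hpre, Measure.pi_pi]
  simp [apply_ite (gaussianReal 0 1)]

noncomputable def Aset (d : ℕ) (h0 : 0 < d) (c : ℝ) : Set (EuclideanSpace ℝ (Fin d)) :=
  {z | 2 * z ⟨0, h0⟩ + c * ‖z‖ ^ 2 < 0}

lemma continuous_expr (d : ℕ) (h0 : 0 < d) (c : ℝ) :
    Continuous (fun z : EuclideanSpace ℝ (Fin d) => 2 * z ⟨0, h0⟩ + c * ‖z‖ ^ 2) := by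
  have h1 : Continuous (fun z : EuclideanSpace ℝ (Fin d) => z ⟨0, h0⟩) :=
    (continuous_apply (⟨0, h0⟩ : Fin d)).comp (EuclideanSpace.equiv (Fin d) ℝ).continuous
  continuity

lemma isOpen_Aset (d : ℕ) (h0 : 0 < d) (c : ℝ) : IsOpen (Aset d h0 c) :=
  isOpen_lt (continuous_expr d h0 c) continuous_const

lemma measurableSet_Aset (d : ℕ) (h0 : 0 < d) (c : ℝ) : MeasurableSet (Aset d h0 c) :=
  (isOpen_Aset d h0 c).measurableSet

lemma Aset_anti (d : ℕ) (h0 : 0 < d) {c₁ c₂ : ℝ} (h : c₁ ≤ c₂) :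
    Aset d h0 c₂ ⊆ Aset d h0 c₁ := by
  intro z hz
  simp only [Aset, Set.mem_setOf_eq] at *
  nlinarith [sq_nonneg ‖z‖, norm_nonneg z]

lemma stdGaussian_pos_open (d : ℕ) {U : Set (EuclideanSpace ℝ (Fin d))} (hU : IsOpen U)
    (hne : U.Nonempty) : stdGaussian d U ≠ 0 := by
  intro h
  have : (volume : Measure (EuclideanSpace ℝ (Fin d))) U = 0 := volume_ac d h
  exact (hU.measure_pos volume hne).ne' this

noncomputable def Fc (d : ℕ) (h0 : 0 < d) (c : ℝ) : ℝ := ((stdGaussian d) (Aset d h0 c)).toReal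

lemma smul_single_facts (d : ℕ) (h0 : 0 < d) (t : ℝ) :
    ((t • EuclideanSpace.single (⟨0, h0⟩ : Fin d) (1:ℝ)) : EuclideanSpace ℝ (Fin d)) ⟨0, h0⟩ = t ∧
    ‖(t • EuclideanSpace.single (⟨0, h0⟩ : Fin d) (1:ℝ) : EuclideanSpace ℝ (Fin d))‖ ^ 2 = t ^ 2 := by
  constructor
  · simp [EuclideanSpace.single_apply]
  · rw [norm_smul, EuclideanSpace.norm_single]
    simp [mul_pow, sq_abs]

lemma Fc_strictAntiOn (d : ℕ) (h0 : 0 < d) : StrictAntiOn (Fc d h0) (Ici 0) := by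
  intro c₁ hc₁ c₂ hc₂ h12
  simp only [Set.mem_Ici] at hc₁ hc₂
  have hc₂pos : 0 < c₂ := lt_of_le_of_lt hc₁ h12
  set s : ℝ := c₁ + c₂ with hs_def
  have hs : 0 < s := by rw [hs_def]; linarith
  set t : ℝ := -4 / s with ht_def
  have hts : t * s = -4 := by rw [ht_def]; field_simp
  have ht1 : 2 * t + c₁ * t ^ 2 < 0 := by
    have key1 : (2 * t + c₁ * t ^ 2) * s ^ 2 = 2 * (t * s) * s + c₁ * (t * s) ^ 2 := by ring
    rw [hts] at key1
    nlinarith [mul_pos hs hs]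
  have ht2 : 0 < 2 * t + c₂ * t ^ 2 := by
    have key2 : (2 * t + c₂ * t ^ 2) * s ^ 2 = 2 * (t * s) * s + c₂ * (t * s) ^ 2 := by ring
    rw [hts] at key2
    nlinarith [mul_pos hs hs]
  set U : Set (EuclideanSpace ℝ (Fin d)) :=
    {z | 2 * z ⟨0, h0⟩ + c₁ * ‖z‖ ^ 2 < 0 ∧ 0 < 2 * z ⟨0, h0⟩ + c₂ * ‖z‖ ^ 2} with hU_def
  have hUopen : IsOpen U :=
    (isOpen_lt (continuous_expr d h0 c₁) continuous_const).inter
      (isOpen_lt continuous_const (continuous_expr d h0 c₂))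
  have hUne : U.Nonempty := by
    refine ⟨t • EuclideanSpace.single (⟨0, h0⟩ : Fin d) (1:ℝ), ?_, ?_⟩ <;>
      rw [(smul_single_facts d h0 t).1, (smul_single_facts d h0 t).2]
    · exact ht1
    · exact ht2
  have hUsub : U ⊆ Aset d h0 c₁ := fun z hz => hz.1
  have hUdisj : Disjoint (Aset d h0 c₂) U := by
    rw [Set.disjoint_left]
    intro z hz hzU
    exact absurd hz.out (not_lt.mpr (le_of_lt hzU.2))
  have hmono : stdGaussian d (Aset d h0 c₂) + stdGaussian d U ≤ stdGaussian d (Aset d h0 c₁) := by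
    rw [← measure_union hUdisj hUopen.measurableSet]
    exact measure_mono (Set.union_subset (Aset_anti d h0 (le_of_lt h12)) hUsub)
  have hU0 : stdGaussian d U ≠ 0 := stdGaussian_pos_open d hUopen hUne
  have hlt : stdGaussian d (Aset d h0 c₂) < stdGaussian d (Aset d h0 c₁) :=
    lt_of_lt_of_le (ENNReal.lt_add_right (measure_ne_top _ _) hU0) hmono
  exact (ENNReal.toReal_lt_toReal (measure_ne_top _ _) (measure_ne_top _ _)).mpr hlt

lemma Fc_pos (d : ℕ) (h0 : 0 < d) {c : ℝ} (hc : 0 < c) : 0 < Fc d h0 c := by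
  have hne : (Aset d h0 c).Nonempty := by
    refine ⟨(-1/c) • EuclideanSpace.single (⟨0, h0⟩ : Fin d) (1:ℝ), ?_⟩
    show 2 * _ + c * ‖_‖ ^ 2 < 0
    rw [(smul_single_facts d h0 (-1/c)).1, (smul_single_facts d h0 (-1/c)).2]
    have : c * (-1/c) ^ 2 = 1/c := by field_simp
    rw [this]
    have h1 : (0:ℝ) < 1/c := by positivity
    have h2 : 2 * (-1/c) = -(2/c) := by ring
    rw [h2]
    have : (1:ℝ)/c < 2/c := (div_lt_div_iff_of_pos_right hc).mpr (by norm_num)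
    linarith
  have := stdGaussian_pos_open d (isOpen_Aset d h0 c) hne
  exact ENNReal.toReal_pos this (measure_ne_top _ _)

lemma Fc_zero (d : ℕ) (h0 : 0 < d) : Fc d h0 0 = 1/2 := by
  have hset : Aset d h0 0 = {z : EuclideanSpace ℝ (Fin d) | z ⟨0, h0⟩ ∈ Iio (0:ℝ)} := by
    ext z
    simp only [Aset, Set.mem_setOf_eq, zero_mul, add_zero, Set.mem_Iio]
    constructor <;> intro h <;> linarith
  rw [Fc, hset, stdGaussian_cyl d h0 _ measurableSet_Iio, gauss_Iio_zero]
  simp [ENNReal.toReal_div]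

lemma boundary_null (d : ℕ) (h0 : 0 < d) {c : ℝ} (hc : 0 ≤ c) :
    stdGaussian d {z : EuclideanSpace ℝ (Fin d) | 2 * z ⟨0, h0⟩ + c * ‖z‖ ^ 2 = 0} = 0 := by
  rcases eq_or_lt_of_le hc with hc0 | hcpos
  · have hset : {z : EuclideanSpace ℝ (Fin d) | 2 * z ⟨0, h0⟩ + c * ‖z‖ ^ 2 = 0}
        = {z : EuclideanSpace ℝ (Fin d) | z ⟨0, h0⟩ ∈ ({0} : Set ℝ)} := by
      ext z
      simp only [Set.mem_setOf_eq, ← hc0, zero_mul, add_zero, Set.mem_singleton_iff]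
      constructor <;> intro h <;> linarith
    rw [hset, stdGaussian_cyl d h0 _ (measurableSet_singleton 0), gauss_singleton]
  · set x₀ : EuclideanSpace ℝ (Fin d) := (-(1/c)) • EuclideanSpace.single (⟨0, h0⟩ : Fin d) (1:ℝ)
      with hx₀
    have hinner : ∀ z : EuclideanSpace ℝ (Fin d), (inner ℝ z x₀ : ℝ) = -(1/c) * z ⟨0, h0⟩ := by
      intro z
      rw [hx₀, real_inner_smul_right]
      congr 1
      simpa using EuclideanSpace.inner_single_right (𝕜 := ℝ) (⟨0, h0⟩ : Fin d) 1 z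
    have hnx₀ : ‖x₀‖ ^ 2 = (1/c) ^ 2 := by
      rw [hx₀, norm_smul, EuclideanSpace.norm_single]
      simp [mul_pow, sq_abs]
    have hsetsphere : {z : EuclideanSpace ℝ (Fin d) | 2 * z ⟨0, h0⟩ + c * ‖z‖ ^ 2 = 0}
        = Metric.sphere x₀ (1/c) := by
      ext z
      simp only [Set.mem_setOf_eq, Metric.mem_sphere, dist_eq_norm]
      have hn : ‖z - x₀‖ ^ 2 = ‖z‖ ^ 2 + (2/c) * z ⟨0, h0⟩ + (1/c) ^ 2 := by
        rw [norm_sub_sq_real, hinner z, hnx₀]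
        ring
      constructor
      · intro h
        have h2 : ‖z - x₀‖ ^ 2 = (1/c) ^ 2 := by
          rw [hn]
          have : ‖z‖ ^ 2 + (2/c) * z ⟨0, h0⟩ = 0 := by
            field_simp
            nlinarith
          linarith
        rw [← Real.sqrt_sq (norm_nonneg (z - x₀)), h2,
          Real.sqrt_sq (by positivity : (0:ℝ) ≤ 1/c)]
      · intro h
        have h2 : ‖z - x₀‖ ^ 2 = (1/c) ^ 2 := by rw [h]
        rw [hn] at h2
        have h3 : ‖z‖ ^ 2 + (2/c) * z ⟨0, h0⟩ = 0 := by linarith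
        have h4 : c * (‖z‖ ^ 2 + (2/c) * z ⟨0, h0⟩) = c * ‖z‖ ^ 2 + 2 * z ⟨0, h0⟩ := by
          field_simp
        rw [h3, mul_zero] at h4
        linarith
    haveI : Nontrivial (EuclideanSpace ℝ (Fin d)) :=
      ⟨⟨EuclideanSpace.single (⟨0, h0⟩ : Fin d) (1:ℝ), 0, fun h => by
        have h2 := congrArg (fun v : EuclideanSpace ℝ (Fin d) => v (⟨0, h0⟩ : Fin d)) h
        simp [EuclideanSpace.single_apply] at h2⟩⟩
    rw [hsetsphere]
    exact stdGaussian_ac d (Measure.addHaar_sphere volume x₀ (1/c))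

lemma Fc_tendsto (d : ℕ) (h0 : 0 < d) {l : Filter ℝ} [l.IsCountablyGenerated] {c₀ : ℝ}
    (hl : l ≤ nhds c₀) (hc₀ : 0 ≤ c₀) :
    Tendsto (Fc d h0) l (nhds (Fc d h0 c₀)) := by
  have hrep : Fc d h0 = fun c => ∫ z, (Aset d h0 c).indicator (1 : EuclideanSpace ℝ (Fin d) → ℝ) z ∂(stdGaussian d) :=
    funext fun c => (integral_indicator_one (measurableSet_Aset d h0 c)).symm
  rw [hrep]
  refine tendsto_integral_filter_of_dominated_convergence (fun _ => 1) ?_ ?_ ?_ ?_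
  · exact Eventually.of_forall fun c =>
      (aestronglyMeasurable_const.indicator (measurableSet_Aset d h0 c))
  · refine Eventually.of_forall fun c => Eventually.of_forall fun z => ?_
    by_cases hz : z ∈ Aset d h0 c <;> simp [Set.indicator_apply, hz]
  · exact integrable_const 1
  · have hae : ∀ᵐ z ∂(stdGaussian d), 2 * z ⟨0, h0⟩ + c₀ * ‖z‖ ^ 2 ≠ 0 := by
      rw [ae_iff]
      simpa using boundary_null d h0 hc₀
    filter_upwards [hae] with z hz
    have hcont : Tendsto (fun c : ℝ => 2 * z ⟨0, h0⟩ + c * ‖z‖ ^ 2) l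
        (nhds (2 * z ⟨0, h0⟩ + c₀ * ‖z‖ ^ 2)) :=
      ((continuous_const.add (continuous_id.mul continuous_const)).tendsto c₀).mono_left hl
    rcases lt_or_gt_of_ne hz with hneg | hpos
    · have hmem : z ∈ Aset d h0 c₀ := hneg
      have hev : ∀ᶠ c in l, (Aset d h0 c).indicator (1 : EuclideanSpace ℝ (Fin d) → ℝ) z = 1 := by
        filter_upwards [hcont.eventually_lt_const hneg] with c hc
        rw [Set.indicator_of_mem (show z ∈ Aset d h0 c from hc)]
        rfl
      rw [Set.indicator_of_mem hmem]
      exact Tendsto.congr' (hev.mono fun c hc => hc.symm) tendsto_const_nhds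
    · have hmem : z ∉ Aset d h0 c₀ := not_lt.mpr (le_of_lt hpos)
      have hev : ∀ᶠ c in l, (Aset d h0 c).indicator (1 : EuclideanSpace ℝ (Fin d) → ℝ) z = 0 := by
        filter_upwards [hcont.eventually_const_lt hpos] with c hc
        exact Set.indicator_of_notMem (show z ∉ Aset d h0 c from not_lt.mpr (le_of_lt hc)) _
      rw [Set.indicator_of_notMem hmem]
      exact Tendsto.congr' (hev.mono fun c hc => hc.symm) tendsto_const_nhds

lemma Fc_continuousAt (d : ℕ) (h0 : 0 < d) {c₀ : ℝ} (hc₀ : 0 ≤ c₀) :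
    ContinuousAt (Fc d h0) c₀ :=
  Fc_tendsto d h0 le_rfl hc₀

lemma Fc_le_half (d : ℕ) (h0 : 0 < d) {c : ℝ} (hc : 0 < c) : Fc d h0 c < 1/2 := by
  rw [← Fc_zero d h0]
  exact Fc_strictAntiOn d h0 (Set.mem_Ici.mpr (le_refl (0:ℝ))) (le_of_lt hc) hc

lemma Fc_tendsto_atTop (d : ℕ) (h0 : 0 < d) : Tendsto (Fc d h0) atTop (nhds 0) := by
  have hbound : ∀ c : ℝ, 0 < c → Fc d h0 c ≤ 2 / c := by
    intro c hc
    have hsub : Aset d h0 c ⊆ {z : EuclideanSpace ℝ (Fin d) | z ⟨0, h0⟩ ∈ Ioo (-(2/c)) 0} := by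
      intro z hz
      have hz' : 2 * z ⟨0, h0⟩ + c * ‖z‖ ^ 2 < 0 := hz
      have hcoord : (z ⟨0, h0⟩) ^ 2 ≤ ‖z‖ ^ 2 := by
        have h1 : |(inner ℝ (EuclideanSpace.single (⟨0, h0⟩ : Fin d) (1:ℝ)) z : ℝ)| ≤
            ‖EuclideanSpace.single (⟨0, h0⟩ : Fin d) (1:ℝ)‖ * ‖z‖ := abs_real_inner_le_norm _ _
        rw [EuclideanSpace.norm_single] at h1
        have h2 : (inner ℝ (EuclideanSpace.single (⟨0, h0⟩ : Fin d) (1:ℝ)) z : ℝ) = z ⟨0, h0⟩ := by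
          simpa using EuclideanSpace.inner_single_left (𝕜 := ℝ) (⟨0, h0⟩ : Fin d) 1 z
        rw [h2] at h1
        simp only [norm_one, one_mul] at h1
        nlinarith [abs_nonneg (z ⟨0, h0⟩), norm_nonneg z, sq_abs (z ⟨0, h0⟩)]
      set u : ℝ := z ⟨0, h0⟩
      have hq : 2 * u + c * u ^ 2 < 0 := by nlinarith
      have hu_neg : u < 0 := by nlinarith [sq_nonneg u]
      have hu_lb : -(2/c) < u := by
        rcases lt_or_ge (-(2/c)) u with h | h
        · exact h
        · exfalso
          have h1 : c * u ≤ -2 := by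
            have := mul_le_mul_of_nonneg_left h (le_of_lt hc)
            calc c * u ≤ c * (-(2/c)) := by nlinarith
              _ = -2 := by field_simp
          nlinarith
      exact ⟨hu_lb, hu_neg⟩
    have hmeas := measure_mono (μ := stdGaussian d) hsub
    have hcyl : stdGaussian d {z : EuclideanSpace ℝ (Fin d) | z ⟨0, h0⟩ ∈ Ioo (-(2/c)) 0}
        = gaussianReal 0 1 (Ioo (-(2/c)) 0) := stdGaussian_cyl d h0 _ measurableSet_Ioo
    have hle : stdGaussian d (Aset d h0 c) ≤ ENNReal.ofReal (2/c) := by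
      calc stdGaussian d (Aset d h0 c) ≤ _ := hmeas
        _ = gaussianReal 0 1 (Ioo (-(2/c)) 0) := hcyl
        _ ≤ ENNReal.ofReal (0 - (-(2/c))) := gauss_Ioo_le _ _
        _ = ENNReal.ofReal (2/c) := by norm_num
    calc Fc d h0 c ≤ (ENNReal.ofReal (2/c)).toReal :=
          ENNReal.toReal_mono ENNReal.ofReal_ne_top hle
      _ = 2/c := ENNReal.toReal_ofReal (by positivity)
  have h2c : Tendsto (fun c : ℝ => 2 / c) atTop (nhds 0) := by
    simpa [div_eq_mul_inv] using tendsto_inv_atTop_zero.const_mul (2:ℝ)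
  refine squeeze_zero' ?_ ?_ h2c
  · exact Eventually.of_forall fun c => ENNReal.toReal_nonneg
  · exact (eventually_gt_atTop 0).mono fun c hc => hbound c hc

lemma psucc_eq (d : ℕ) (h0 : 0 < d) {σb : ℝ} (hσ : 0 < σb) :
    psucc d 0 σb = Fc d h0 (σb / d) := by
  have hdpos : (0:ℝ) < d := Nat.cast_pos.mpr h0
  have hc : 0 < σb / (d:ℝ) := div_pos hσ hdpos
  have hset : {z : EuclideanSpace ℝ (Fin d) | ‖e1 d + (σb / (d:ℝ)) • z‖ < 1 - 0}
      = Aset d h0 (σb / (d:ℝ)) := by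
    ext z
    simp only [Set.mem_setOf_eq, sub_zero, Aset]
    have he1 : e1 d = EuclideanSpace.single (⟨0, h0⟩ : Fin d) (1:ℝ) := dif_pos h0
    have hinner : (inner ℝ (e1 d) z : ℝ) = z ⟨0, h0⟩ := by
      rw [he1]
      simpa using EuclideanSpace.inner_single_left (𝕜 := ℝ) (⟨0, h0⟩ : Fin d) 1 z
    have hnorm1 : ‖e1 d‖ = 1 := by rw [he1]; simp
    have hsq : ‖e1 d + (σb / (d:ℝ)) • z‖ ^ 2
        = 1 + (σb / (d:ℝ)) * (2 * z ⟨0, h0⟩ + (σb / (d:ℝ)) * ‖z‖ ^ 2) := by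
      rw [norm_add_sq_real, hnorm1, real_inner_smul_right, hinner, norm_smul,
        Real.norm_eq_abs, mul_pow, sq_abs]
      ring
    constructor
    · intro h
      have h1 : ‖e1 d + (σb / (d:ℝ)) • z‖ ^ 2 < 1 := by
        nlinarith [norm_nonneg (e1 d + (σb / (d:ℝ)) • z)]
      nlinarith
    · intro h
      have h1 : ‖e1 d + (σb / (d:ℝ)) • z‖ ^ 2 < 1 := by nlinarith
      nlinarith [norm_nonneg (e1 d + (σb / (d:ℝ)) • z)]
  unfold psucc Fc
  rw [hset]

end PsuccAux

/-- For `d ≥ 1`, the image of `σ̄ ↦ p^succ_{0,d}(σ̄)` on `(0,∞)` is exactly `(0, 1/2)`;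
in particular the limits at `0+` and `∞` are `1/2` and `0`, and the map is a bijection
from `(0,∞)` onto `(0, 1/2)`. -/
theorem psucc_image (d : ℕ) (hd : 1 ≤ d) :
    (psucc d 0) '' (Set.Ioi 0) = Set.Ioo 0 (1/2) ∧
    Filter.Tendsto (psucc d 0) (nhdsWithin 0 (Set.Ioi 0)) (nhds (1/2)) ∧
    Filter.Tendsto (psucc d 0) Filter.atTop (nhds 0) ∧
    Set.BijOn (psucc d 0) (Set.Ioi 0) (Set.Ioo 0 (1/2)) := by
  have h0 : 0 < d := hd
  have hdpos : (0:ℝ) < d := Nat.cast_pos.mpr h0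
  have hdne : (d:ℝ) ≠ 0 := ne_of_gt hdpos
  have hcomp : ∀ σb : ℝ, σb ∈ Set.Ioi (0:ℝ) → psucc d 0 σb = (PsuccAux.Fc d h0) (σb / d) :=
    fun σb hσ => PsuccAux.psucc_eq d h0 hσ
  have hdiv0 : Tendsto (fun σ : ℝ => σ / d) (nhdsWithin 0 (Set.Ioi 0)) (nhds 0) := by
    have : Tendsto (fun σ : ℝ => σ / d) (nhds 0) (nhds (0 / d)) :=
      (continuous_id.div_const _).tendsto 0
    rw [zero_div] at this
    exact this.mono_left nhdsWithin_le_nhds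
  -- limit at 0+
  have h1 : Tendsto (psucc d 0) (nhdsWithin 0 (Set.Ioi 0)) (nhds (1/2)) := by
    have hFt : Tendsto (PsuccAux.Fc d h0) (nhds 0) (nhds ((PsuccAux.Fc d h0) 0)) := PsuccAux.Fc_continuousAt d h0 le_rfl
    have : Tendsto (fun σ : ℝ => (PsuccAux.Fc d h0) (σ / d)) (nhdsWithin 0 (Set.Ioi 0)) (nhds ((PsuccAux.Fc d h0) 0)) :=
      hFt.comp hdiv0
    rw [PsuccAux.Fc_zero d h0] at this
    refine this.congr' ?_
    filter_upwards [self_mem_nhdsWithin] with σ hσ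
    exact (hcomp σ hσ).symm
  -- limit at atTop
  have h2 : Tendsto (psucc d 0) atTop (nhds 0) := by
    have hdivT : Tendsto (fun σ : ℝ => σ / d) atTop atTop :=
      tendsto_id.atTop_div_const hdpos
    have : Tendsto (fun σ : ℝ => (PsuccAux.Fc d h0) (σ / d)) atTop (nhds 0) :=
      (PsuccAux.Fc_tendsto_atTop d h0).comp hdivT
    refine this.congr' ?_
    filter_upwards [eventually_gt_atTop 0] with σ hσ
    exact (hcomp σ hσ).symm
  -- bijection
  have hmaps : Set.MapsTo (psucc d 0) (Set.Ioi 0) (Set.Ioo 0 (1/2)) := by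
    intro σ hσ
    rw [hcomp σ hσ]
    have hc : 0 < σ / (d:ℝ) := div_pos hσ hdpos
    exact ⟨PsuccAux.Fc_pos d h0 hc, PsuccAux.Fc_le_half d h0 hc⟩
  have hinj : Set.InjOn (psucc d 0) (Set.Ioi 0) := by
    intro σ₁ h₁ σ₂ h₂ heq
    rw [hcomp σ₁ h₁, hcomp σ₂ h₂] at heq
    have := (PsuccAux.Fc_strictAntiOn d h0).injOn
      (le_of_lt (div_pos h₁ hdpos)) (le_of_lt (div_pos h₂ hdpos)) heq
    field_simp at this
    exact this
  have hsurj : Set.SurjOn (psucc d 0) (Set.Ioi 0) (Set.Ioo 0 (1/2)) := by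
    intro y hy
    obtain ⟨hy0, hy2⟩ := hy
    have hFt : Tendsto (PsuccAux.Fc d h0) (nhdsWithin 0 (Set.Ioi 0)) (nhds (1/2)) := by
      have := (PsuccAux.Fc_continuousAt d h0 le_rfl).tendsto.mono_left
        (nhdsWithin_le_nhds (s := Set.Ioi (0:ℝ)))
      rwa [PsuccAux.Fc_zero d h0] at this
    have hev : ∀ᶠ c in nhdsWithin 0 (Set.Ioi (0:ℝ)), y < (PsuccAux.Fc d h0) c := hFt.eventually_const_lt hy2
    obtain ⟨a, hya, ha⟩ : ∃ a, y < (PsuccAux.Fc d h0) a ∧ a ∈ Set.Ioi (0:ℝ) :=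
      (hev.and self_mem_nhdsWithin).exists
    have hevT : ∀ᶠ c in atTop, (PsuccAux.Fc d h0) c < y :=
      (PsuccAux.Fc_tendsto_atTop d h0).eventually_lt_const hy0
    obtain ⟨b, hFb, hab⟩ : ∃ b, (PsuccAux.Fc d h0) b < y ∧ a ≤ b := (hevT.and (eventually_ge_atTop a)).exists
    have hcont : ContinuousOn (PsuccAux.Fc d h0) (Set.Icc a b) := fun c hc =>
      (PsuccAux.Fc_continuousAt d h0 (le_trans (le_of_lt ha) hc.1)).continuousWithinAt
    have hy_mem : y ∈ Set.Icc ((PsuccAux.Fc d h0) b) ((PsuccAux.Fc d h0) a) := ⟨le_of_lt hFb, le_of_lt hya⟩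
    obtain ⟨c, hc_mem, hFc⟩ := intermediate_value_Icc' hab hcont hy_mem
    have hcpos : 0 < c := lt_of_lt_of_le ha hc_mem.1
    refine ⟨c * d, ?_, ?_⟩
    · exact mul_pos hcpos hdpos
    · rw [hcomp (c * d) (mul_pos hcpos hdpos), mul_div_cancel_right₀ c hdne, hFc]
  have hbij : Set.BijOn (psucc d 0) (Set.Ioi 0) (Set.Ioo 0 (1/2)) := ⟨hmaps, hinj, hsurj⟩
  exact ⟨hbij.image_eq, h1, h2, hbij⟩
end

section
/- Let r : ℕ → [0, 1) be a sequence of rates such that lim_{d → ∞} d·r(d) = ρ for some ρ ≥ 0. Then for every σ̄ > 0 the limit lim_{d → ∞} p^succ_{r(d),d}(σ̄) exists and equals Φ(−ρ/σ̄ − σ̄/2), where Φ is the cumulative distribution function of the standard normal distribution on ℝ. -/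
open MeasureTheory ProbabilityTheory Real Set Filter
open scoped ENNReal

/-- The cumulative distribution function of the standard normal distribution on `ℝ`. -/
noncomputable def stdNormalCDF (x : ℝ) : ℝ := ((gaussianReal 0 1) (Set.Iic x)).toReal

lemma pdf01 (x : ℝ) :
    gaussianPDFReal 0 1 x = (Real.sqrt (2 * π))⁻¹ * Real.exp (-(1/2) * x ^ 2) := by
  simp only [gaussianPDFReal, NNReal.coe_one, mul_one, sub_zero]
  ring_nf

lemma intPowExp (n : ℕ) :
    Integrable (fun x : ℝ => x ^ n * Real.exp (-(1/2) * x ^ 2)) := by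
  have h := integrable_rpow_mul_exp_neg_mul_sq (b := 1/2) (by norm_num) (s := (n : ℝ))
    (lt_of_lt_of_le (by norm_num) (Nat.cast_nonneg n))
  simpa [Real.rpow_natCast] using h

lemma tendsto_xexp_atTop :
    Tendsto (fun x : ℝ => x * Real.exp (-(1/2) * x ^ 2)) atTop (nhds 0) := by
  have h := rpow_mul_exp_neg_mul_sq_isLittleO_exp_neg (b := 1/2) (by norm_num) 1
  have hlin : Tendsto (fun x : ℝ => -(1/2) * x) atTop atBot := by
    apply Tendsto.const_mul_atTop_of_neg (by norm_num : (-(1/2):ℝ) < 0) tendsto_id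
  have h2 : Tendsto (fun x : ℝ => Real.exp (-(1/2) * x)) atTop (nhds 0) :=
    Real.tendsto_exp_atBot.comp hlin
  have := h.trans_tendsto h2
  simpa [Real.rpow_one] using this

lemma gauss_eq_withDensity :
    gaussianReal 0 1 = volume.withDensity (fun x => ((gaussianPDFReal 0 1 x).toNNReal : ℝ≥0∞)) := by
  rw [gaussianReal_of_var_ne_zero 0 one_ne_zero]
  rfl

lemma integral_gauss (g : ℝ → ℝ) :
    ∫ y, g y ∂(gaussianReal 0 1) = ∫ y, gaussianPDFReal 0 1 y * g y := by
  rw [gauss_eq_withDensity, integral_withDensity_eq_integral_smul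
    ((measurable_gaussianPDFReal 0 1).real_toNNReal) g]
  congr 1 with y
  simp [NNReal.smul_def, Real.coe_toNNReal _ (gaussianPDFReal_nonneg 0 1 y)]

lemma integrable_gauss_of_poly {g : ℝ → ℝ} (hg : Measurable g)
    (hi : Integrable (fun x : ℝ => g x * Real.exp (-(1/2) * x ^ 2))) :
    Integrable g (gaussianReal 0 1) := by
  rw [gauss_eq_withDensity, integrable_withDensity_iff
    ((measurable_gaussianPDFReal 0 1).real_toNNReal.coe_nnreal_ennreal)
    (Eventually.of_forall fun x => ENNReal.coe_lt_top)]
  have : ∀ y : ℝ, g y * ((gaussianPDFReal 0 1 y).toNNReal : ℝ) =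
      (Real.sqrt (2 * π))⁻¹ * (g y * Real.exp (-(1/2) * y ^ 2)) := by
    intro y
    rw [Real.coe_toNNReal _ (gaussianPDFReal_nonneg 0 1 y), pdf01]
    ring
  exact (hi.const_mul ((Real.sqrt (2 * π))⁻¹)).congr (Eventually.of_forall fun y => (this y).symm)

lemma integrable_g : Integrable (fun y : ℝ => y ^ 2 - 1) (gaussianReal 0 1) := by
  apply integrable_gauss_of_poly (by fun_prop)
  have h2 := intPowExp 2
  have h0 := intPowExp 0
  simpa [sub_mul, Pi.sub_def] using h2.sub (by simpa using h0)

lemma integrable_g2 : Integrable (fun y : ℝ => (y ^ 2 - 1) ^ 2) (gaussianReal 0 1) := by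
  apply integrable_gauss_of_poly (by fun_prop)
  have h4 := intPowExp 4
  have h2 := (intPowExp 2).const_mul 2
  have h0 := intPowExp 0
  have : (fun x : ℝ => (x ^ 2 - 1) ^ 2 * Real.exp (-(1/2) * x ^ 2)) =
      fun x : ℝ => (x ^ 4 * Real.exp (-(1/2) * x ^ 2) + 1 * Real.exp (-(1/2) * x ^ 2))
        - 2 * (x ^ 2 * Real.exp (-(1/2) * x ^ 2)) := by
    funext x; ring
  rw [this]
  exact ((h4.add (by simpa using h0)).sub h2)

lemma integral_g_zero : ∫ y, (y ^ 2 - 1) ∂(gaussianReal 0 1) = 0 := by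
  have hderiv : ∀ x : ℝ, HasDerivAt (fun y : ℝ => -y * Real.exp (-(1/2) * y ^ 2))
      ((x ^ 2 - 1) * Real.exp (-(1/2) * x ^ 2)) x := by
    intro x
    have h1 : HasDerivAt (fun y : ℝ => -(1/2) * y ^ 2) (-(1/2) * (2 * x)) x := by
      simpa using ((hasDerivAt_pow 2 x).const_mul (-(1/2) : ℝ))
    have h2 := h1.exp
    have h3 := (hasDerivAt_id' x).neg.mul h2
    refine h3.congr_deriv ?_
    simp only [Pi.neg_apply]
    ring
  have hint : Integrable (fun x : ℝ => (x ^ 2 - 1) * Real.exp (-(1/2) * x ^ 2)) := by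
    have h2 := intPowExp 2
    have h0 := intPowExp 0
    simpa [sub_mul, Pi.sub_def] using h2.sub (by simpa using h0)
  have htop : Tendsto (fun y : ℝ => -y * Real.exp (-(1/2) * y ^ 2)) atTop (nhds 0) := by
    simpa using tendsto_xexp_atTop.neg
  have hbot : Tendsto (fun y : ℝ => -y * Real.exp (-(1/2) * y ^ 2)) atBot (nhds 0) := by
    have := tendsto_xexp_atTop.comp tendsto_neg_atBot_atTop
    apply this.congr
    intro x
    simp [neg_sq]
  have hFTC := integral_of_hasDerivAt_of_tendsto hderiv hint hbot htop
  rw [integral_gauss]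
  have : ∀ y : ℝ, gaussianPDFReal 0 1 y * (y ^ 2 - 1) =
      (Real.sqrt (2 * π))⁻¹ * ((y ^ 2 - 1) * Real.exp (-(1/2) * y ^ 2)) := by
    intro y; rw [pdf01]; ring
  simp only [this]
  rw [MeasureTheory.integral_const_mul, hFTC]
  ring

noncomputable def gpi (d : ℕ) : Measure (Fin d → ℝ) :=
  Measure.pi fun _ : Fin d => gaussianReal 0 1

instance (d : ℕ) : IsProbabilityMeasure (gpi d) := by
  unfold gpi; infer_instance

lemma gpi_integral_prod {d : ℕ} (f : Fin d → ℝ → ℝ) :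
    ∫ x, ∏ i, f i (x i) ∂(gpi d) = ∏ i, ∫ y, f i y ∂(gaussianReal 0 1) := by
  letI : MeasureSpace ℝ := ⟨gaussianReal 0 1⟩
  haveI : SigmaFinite (volume : Measure ℝ) := inferInstanceAs (SigmaFinite (gaussianReal 0 1))
  exact MeasureTheory.integral_fintype_prod_eq_prod f

lemma gpi_integrable_prod {d : ℕ} (f : Fin d → ℝ → ℝ)
    (hf : ∀ i, Integrable (f i) (gaussianReal 0 1)) :
    Integrable (fun x => ∏ i, f i (x i)) (gpi d) := by
  letI : MeasureSpace ℝ := ⟨gaussianReal 0 1⟩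
  haveI : SigmaFinite (volume : Measure ℝ) := inferInstanceAs (SigmaFinite (gaussianReal 0 1))
  exact MeasureTheory.Integrable.fintype_prod (f := f) hf

lemma gpi_coord_lt {d : ℕ} (i0 : Fin d) (s : ℝ) :
    gpi d {x | x i0 < s} = gaussianReal 0 1 (Iio s) := by
  have hset : {x : Fin d → ℝ | x i0 < s} =
      Set.pi univ (Function.update (fun _ => (univ : Set ℝ)) i0 (Iio s)) := by
    rw [← Set.eval_preimage]
    rfl
  rw [gpi, hset, Measure.pi_pi]
  rw [Finset.prod_eq_single i0]
  · simp
  · intro j _ hj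
    simp [Function.update_of_ne hj]
  · simp

lemma gauss_Iio_eq_Iic (s : ℝ) : gaussianReal 0 1 (Iio s) = gaussianReal 0 1 (Iic s) := by
  refine le_antisymm (measure_mono Iio_subset_Iic_self) ?_
  have hs : gaussianReal 0 1 {s} = 0 :=
    gaussianReal_absolutelyContinuous 0 one_ne_zero (measure_singleton s)
  calc gaussianReal 0 1 (Iic s) = gaussianReal 0 1 (Iio s ∪ {s}) := by rw [Iio_union_right]
  _ ≤ gaussianReal 0 1 (Iio s) + gaussianReal 0 1 {s} := measure_union_le _ _
  _ = gaussianReal 0 1 (Iio s) := by rw [hs, add_zero]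

lemma stdNormalCDF_eq_integral (s : ℝ) :
    stdNormalCDF s = ∫ y in Iic s, gaussianPDFReal 0 1 y := by
  rw [stdNormalCDF, gaussianReal_apply_eq_integral 0 one_ne_zero,
    ENNReal.toReal_ofReal
      (setIntegral_nonneg measurableSet_Iic fun y _ => gaussianPDFReal_nonneg 0 1 y)]

lemma stdNormalCDF_continuous : Continuous stdNormalCDF := by
  have hint : Integrable (gaussianPDFReal 0 1) volume := integrable_gaussianPDFReal 0 1
  have h : ∀ s : ℝ, stdNormalCDF s =
      (∫ y in Iic (0:ℝ), gaussianPDFReal 0 1 y) + ∫ y in (0:ℝ)..s, gaussianPDFReal 0 1 y := by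
    intro s
    rw [stdNormalCDF_eq_integral,
      ← intervalIntegral.integral_Iic_sub_Iic hint.integrableOn hint.integrableOn]
    ring
  rw [funext h]
  exact continuous_const.add (hint.continuous_primitive 0)

lemma stdNormalCDF_mono : Monotone stdNormalCDF := fun a b hab =>
  ENNReal.toReal_mono (measure_ne_top _ _) (measure_mono (Iic_subset_Iic.2 hab))

lemma gpi_coord_toReal {d : ℕ} (i0 : Fin d) (s : ℝ) :
    (gpi d {x | x i0 < s}).toReal = stdNormalCDF s := by
  rw [gpi_coord_lt, gauss_Iio_eq_Iic, stdNormalCDF]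

noncomputable def Cg : ℝ := ∫ y, ((y ^ 2 - 1) ^ 2) ∂(gaussianReal 0 1)

lemma Cg_nonneg : 0 ≤ Cg := integral_nonneg fun y => sq_nonneg _

/-- factor function for the (i,j) cross term -/
noncomputable def Fij {d : ℕ} (i j k : Fin d) : ℝ → ℝ :=
  fun y => (if k = i then y ^ 2 - 1 else 1) * (if k = j then y ^ 2 - 1 else 1)

lemma term_prod {d : ℕ} (i j : Fin d) (x : Fin d → ℝ) :
    ((x i) ^ 2 - 1) * ((x j) ^ 2 - 1) = ∏ k, Fij i j k (x k) := by
  unfold Fij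
  rw [Finset.prod_mul_distrib, Finset.prod_ite_eq', Finset.prod_ite_eq']
  simp

lemma Fij_integrable {d : ℕ} (i j k : Fin d) :
    Integrable (Fij i j k) (gaussianReal 0 1) := by
  rcases eq_or_ne k i with rfl | h1
  · rcases eq_or_ne k j with rfl | h2
    · exact integrable_g2.congr (Eventually.of_forall fun y => by simp [Fij]; ring)
    · exact integrable_g.congr (Eventually.of_forall fun y => by simp [Fij, h2])
  · rcases eq_or_ne k j with rfl | h2
    · exact integrable_g.congr (Eventually.of_forall fun y => by simp [Fij, h1])
    · exact (integrable_const 1).congr (Eventually.of_forall fun y => by simp [Fij, h1, h2])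

lemma term_integrable {d : ℕ} (i j : Fin d) :
    Integrable (fun x : Fin d → ℝ => ((x i) ^ 2 - 1) * ((x j) ^ 2 - 1)) (gpi d) := by
  have := gpi_integrable_prod (fun k => Fij i j k) (fun k => Fij_integrable i j k)
  exact this.congr (Eventually.of_forall fun x => (term_prod i j x).symm)

lemma term_integral {d : ℕ} (i j : Fin d) :
    ∫ x, ((x i) ^ 2 - 1) * ((x j) ^ 2 - 1) ∂(gpi d) = if i = j then Cg else 0 := by
  have hrw : ∫ x, ((x i) ^ 2 - 1) * ((x j) ^ 2 - 1) ∂(gpi d)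
      = ∏ k, ∫ y, Fij i j k y ∂(gaussianReal 0 1) := by
    rw [← gpi_integral_prod]
    exact integral_congr_ae (Eventually.of_forall fun x => term_prod i j x)
  rw [hrw]
  rcases eq_or_ne i j with h | h
  · subst h
    rw [if_pos rfl, Finset.prod_eq_single i]
    · unfold Cg
      exact integral_congr_ae (Eventually.of_forall fun y => by simp [Fij]; ring)
    · intro k _ hk
      have : ∀ y : ℝ, Fij i i k y = 1 := fun y => by simp [Fij, hk]
      simp only [this]
      simp
    · simp
  · rw [if_neg h]
    apply Finset.prod_eq_zero (Finset.mem_univ i)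
    have hji : ¬ (i = j) := h
    have : ∀ y : ℝ, Fij i j i y = y ^ 2 - 1 := fun y => by simp [Fij, hji]
    simp only [this]
    exact integral_g_zero

lemma Wsq_expand {d : ℕ} (x : Fin d → ℝ) :
    (∑ i, ((x i) ^ 2 - 1)) ^ 2 = ∑ i, ∑ j, ((x i) ^ 2 - 1) * ((x j) ^ 2 - 1) := by
  rw [sq, Finset.sum_mul_sum]

lemma integrable_Wsq {d : ℕ} :
    Integrable (fun x : Fin d → ℝ => (∑ i, ((x i) ^ 2 - 1)) ^ 2) (gpi d) := by
  have : Integrable (fun x : Fin d → ℝ =>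
      ∑ i, ∑ j, ((x i) ^ 2 - 1) * ((x j) ^ 2 - 1)) (gpi d) :=
    integrable_finset_sum _ fun i _ => integrable_finset_sum _ fun j _ => term_integrable i j
  exact this.congr (Eventually.of_forall fun x => (Wsq_expand x).symm)

lemma integral_Wsq {d : ℕ} :
    ∫ x, (∑ i, ((x i) ^ 2 - 1)) ^ 2 ∂(gpi d) = d * Cg := by
  rw [integral_congr_ae (Eventually.of_forall fun x => Wsq_expand x)]
  rw [integral_finset_sum _ fun i _ => integrable_finset_sum _ fun j _ => term_integrable i j]
  have : ∀ i : Fin d, ∫ x, (∑ j, ((x i) ^ 2 - 1) * ((x j) ^ 2 - 1)) ∂(gpi d) = Cg := by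
    intro i
    rw [integral_finset_sum _ fun j _ => term_integrable i j]
    simp only [term_integral]
    simp
  simp only [this]
  simp [mul_comm]

lemma cheb {d : ℕ} (b : ℝ) (hb : 0 < b) :
    ((gpi d) {x | b ≤ |∑ i, ((x i) ^ 2 - 1)|}).toReal ≤ (d * Cg) / b ^ 2 := by
  have hmarkov := mul_meas_ge_le_integral_of_nonneg (μ := gpi d)
    (f := fun x => (∑ i, ((x i) ^ 2 - 1)) ^ 2)
    (Eventually.of_forall fun x => sq_nonneg _) integrable_Wsq (b ^ 2)
  rw [integral_Wsq] at hmarkov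
  have hsub : {x : Fin d → ℝ | b ≤ |∑ i, ((x i) ^ 2 - 1)|} ⊆
      {x | b ^ 2 ≤ (∑ i, ((x i) ^ 2 - 1)) ^ 2} := by
    intro x hx
    have : b ^ 2 ≤ |∑ i, ((x i) ^ 2 - 1)| ^ 2 := pow_le_pow_left₀ hb.le hx 2
    simpa [sq_abs] using this
  have hmono : ((gpi d) {x | b ≤ |∑ i, ((x i) ^ 2 - 1)|}).toReal ≤
      ((gpi d) {x | b ^ 2 ≤ (∑ i, ((x i) ^ 2 - 1)) ^ 2}).toReal :=
    ENNReal.toReal_mono (measure_ne_top _ _) (measure_mono hsub)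
  rw [← le_div_iff₀' (by positivity : (0:ℝ) < b ^ 2)] at hmarkov
  exact hmono.trans hmarkov

lemma psucc_eq {d : ℕ} (hd : 0 < d) {r σb : ℝ} (hr : r < 1) (hσb : 0 < σb) :
    psucc d r σb = ((gpi d) {x | x ⟨0, hd⟩ + σb / (2 * d) * (∑ i, (x i) ^ 2)
      < d * ((1 - r) ^ 2 - 1) / (2 * σb)}).toReal := by
  have hdpos : (0:ℝ) < d := Nat.cast_pos.2 hd
  set i0 : Fin d := ⟨0, hd⟩
  set c : ℝ := σb / d with hc
  have hcpos : 0 < c := by positivity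
  have h1r : 0 < 1 - r := by linarith
  have hcont : Continuous fun z : EuclideanSpace ℝ (Fin d) => ‖e1 d + (σb / d) • z‖ :=
    (continuous_const.add (continuous_const_smul _)).norm
  have hSmeas : MeasurableSet {z : EuclideanSpace ℝ (Fin d) | ‖e1 d + (σb / d) • z‖ < 1 - r} :=
    (isOpen_lt hcont continuous_const).measurableSet
  have hmeas : Measurable ((EuclideanSpace.equiv (Fin d) ℝ).symm :
      (Fin d → ℝ) → EuclideanSpace ℝ (Fin d)) :=
    (EuclideanSpace.equiv (Fin d) ℝ).symm.continuous.measurable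
  rw [psucc, _root_.stdGaussian, Measure.map_apply hmeas hSmeas]
  unfold gpi
  congr 1
  congr 1
  ext x
  simp only [mem_preimage, mem_setOf_eq]
  have hz : ∀ i : Fin d,
      (e1 d + (σb / (d:ℝ)) • ((EuclideanSpace.equiv (Fin d) ℝ).symm x)) i
        = (if i = i0 then 1 else 0) + c * x i := by
    intro i
    have h1 : (e1 d + (σb / (d:ℝ)) • ((EuclideanSpace.equiv (Fin d) ℝ).symm x)) i
        = e1 d i + (σb / (d:ℝ)) * x i := rfl
    rw [h1, hc]
    congr 1
    simp only [e1, dif_pos hd]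
    rw [EuclideanSpace.single_apply]
  rw [EuclideanSpace.norm_eq]
  simp only [hz, Real.norm_eq_abs, sq_abs]
  rw [Real.sqrt_lt' h1r]
  have hsum : ∑ i, ((if i = i0 then (1:ℝ) else 0) + c * x i) ^ 2
      = 1 + 2 * c * x i0 + c ^ 2 * ∑ i, (x i) ^ 2 := by
    have hterm : ∀ i ∈ Finset.univ, ((if i = i0 then (1:ℝ) else 0) + c * x i) ^ 2
        = (if i = i0 then 1 + 2 * c * x i else 0) + c ^ 2 * (x i) ^ 2 := by
      intro i _
      split_ifs <;> ring
    rw [Finset.sum_congr rfl hterm, Finset.sum_add_distrib,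
      Finset.sum_ite_eq' Finset.univ i0 (fun i => 1 + 2 * c * x i), ← Finset.mul_sum]
    simp
  rw [hsum]
  have h2 : (0:ℝ) < d / (2 * σb) := by positivity
  have hkey : (d:ℝ) * ((1 - r) ^ 2 - 1) / (2 * σb)
      - (x i0 + σb / (2 * d) * ∑ i, (x i) ^ 2)
      = (d / (2 * σb)) * ((1 - r) ^ 2 - (1 + 2 * c * x i0 + c ^ 2 * ∑ i, (x i) ^ 2)) := by
    rw [hc]
    field_simp
    ring
  constructor
  · intro h
    have hX : 0 < (d:ℝ) / (2 * σb) * ((1 - r) ^ 2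
        - (1 + 2 * c * x i0 + c ^ 2 * ∑ i, (x i) ^ 2)) := mul_pos h2 (sub_pos.2 h)
    rw [← hkey] at hX
    linarith
  · intro h
    have hX : 0 < (d:ℝ) * ((1 - r) ^ 2 - 1) / (2 * σb)
        - (x i0 + σb / (2 * d) * ∑ i, (x i) ^ 2) := sub_pos.2 h
    rw [hkey] at hX
    have := (mul_pos_iff_of_pos_left h2).1 hX
    linarith

/-- If `d · r(d) → ρ`, then `p^succ_{r(d),d}(σ̄) → Φ(-ρ/σ̄ - σ̄/2)` as `d → ∞`. -/
theorem psucc_limit (r : ℕ → ℝ) (hr : ∀ d, r d ∈ Set.Ico (0:ℝ) 1)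
    (ρ : ℝ) (hρ : 0 ≤ ρ)
    (hlim : Filter.Tendsto (fun d : ℕ => (d : ℝ) * r d) Filter.atTop (nhds ρ))
    (σb : ℝ) (hσb : 0 < σb) :
    Filter.Tendsto (fun d : ℕ => psucc d (r d) σb) Filter.atTop
      (nhds (stdNormalCDF (-ρ / σb - σb / 2))) := by
  set L : ℝ := -ρ / σb - σb / 2 with hL
  set t : ℕ → ℝ := fun d => (d : ℝ) * ((1 - r d) ^ 2 - 1) / (2 * σb) with ht
  -- r d → 0
  have hrlim : Tendsto r atTop (nhds 0) := by
    have h1 : Tendsto (fun d : ℕ => ((d : ℝ) * r d) / (d : ℝ)) atTop (nhds 0) :=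
      hlim.div_atTop tendsto_natCast_atTop_atTop
    apply h1.congr'
    filter_upwards [eventually_ge_atTop 1] with d hd1
    have hd0 : ((d : ℝ)) ≠ 0 := by
      have : (1:ℝ) ≤ (d:ℝ) := by exact_mod_cast hd1
      linarith
    field_simp
  -- t d → -ρ/σb
  have htlim : Tendsto t atTop (nhds (-ρ / σb)) := by
    have h1 : Tendsto (fun d : ℕ => ((d : ℝ) * r d) * r d - 2 * ((d : ℝ) * r d)) atTop
        (nhds (ρ * 0 - 2 * ρ)) := (hlim.mul hrlim).sub (hlim.const_mul 2)
    have h3 : Tendsto (fun d : ℕ => (d : ℝ) * ((1 - r d) ^ 2 - 1)) atTop (nhds (-2 * ρ)) := by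
      have h2 : ∀ d : ℕ, ((d : ℝ) * r d) * r d - 2 * ((d : ℝ) * r d)
          = (d : ℝ) * ((1 - r d) ^ 2 - 1) := by intro d; ring
      have : ρ * 0 - 2 * ρ = -2 * ρ := by ring
      rw [this] at h1
      exact h1.congr fun d => h2 d
    have h4 := h3.div_const (2 * σb)
    have : (-2 * ρ) / (2 * σb) = -ρ / σb := by
      field_simp
    rw [this] at h4
    exact h4
  rw [Metric.tendsto_atTop]
  intro ε hε
  obtain ⟨δ, hδpos, hδ⟩ := Metric.continuous_iff.1 stdNormalCDF_continuous L (ε / 2)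
    (by linarith)
  set w : ℝ := δ / (2 * σb) with hwdef
  have hw : 0 < w := by positivity
  have hev1 : ∀ᶠ d : ℕ in atTop, |t d - (-ρ / σb)| < δ / 4 := by
    have := htlim.eventually (Metric.ball_mem_nhds (-ρ / σb) (by linarith : (0:ℝ) < δ / 4))
    filter_upwards [this] with d hd
    simpa [Real.dist_eq] using hd
  have hev2 : ∀ᶠ d : ℕ in atTop, (d : ℝ) * Cg / ((d : ℝ) * w) ^ 2 < ε / 2 := by
    have h0 : Tendsto (fun d : ℕ => (d : ℝ) * Cg / ((d : ℝ) * w) ^ 2) atTop (nhds 0) := by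
      have hconst : Tendsto (fun d : ℕ => (Cg / w ^ 2) * (1 / (d : ℝ))) atTop (nhds 0) := by
        have := tendsto_one_div_atTop_nhds_zero_nat.const_mul (Cg / w ^ 2)
        simpa using this
      apply hconst.congr'
      filter_upwards [eventually_ge_atTop 1] with d hd1
      have hd0 : ((d : ℝ)) ≠ 0 := by
        have : (1:ℝ) ≤ (d:ℝ) := by exact_mod_cast hd1
        linarith
      field_simp
    exact h0.eventually_lt_const (by linarith : (0:ℝ) < ε / 2)
  have hev := hev1.and (hev2.and (eventually_ge_atTop 1))
  rw [eventually_atTop] at hev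
  obtain ⟨N, hN⟩ := hev
  refine ⟨N, fun d hdN => ?_⟩
  obtain ⟨h1, h2, hd1⟩ := hN d hdN
  have hd0 : 0 < d := hd1
  have hdR : (0:ℝ) < (d : ℝ) := by exact_mod_cast hd0
  set i0 : Fin d := ⟨0, hd0⟩
  -- event identification
  have hpe := psucc_eq hd0 (hr d).2 hσb
  set μ := gpi d
  set E : Set (Fin d → ℝ) :=
    {x | x i0 + σb / (2 * (d:ℝ)) * (∑ i, (x i) ^ 2) < t d} with hE
  have hpe' : psucc d (r d) σb = (μ E).toReal := hpe
  set G : Set (Fin d → ℝ) := {x | (d : ℝ) * w ≤ |∑ i, ((x i) ^ 2 - 1)|} with hG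
  have hGbound : (μ G).toReal < ε / 2 := lt_of_le_of_lt (cheb ((d:ℝ) * w) (by positivity)) h2
  -- arithmetic helpers
  have hsum_eq : ∀ x : Fin d → ℝ, (∑ i, (x i) ^ 2)
      = (∑ i, ((x i) ^ 2 - 1)) + (d : ℝ) := by
    intro x
    rw [Finset.sum_sub_distrib]
    simp [Finset.card_univ]
  have hadw : σb / (2 * (d:ℝ)) * ((d:ℝ) * w) = δ / 4 := by
    rw [hwdef]
    field_simp
    ring
  have had : σb / (2 * (d:ℝ)) * (d:ℝ) = σb / 2 := by field_simp
  have hapos : 0 < σb / (2 * (d:ℝ)) := by positivity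
  set sp : ℝ := t d - σb / 2 + δ / 4 with hsp
  set sm : ℝ := t d - σb / 2 - δ / 4 with hsm
  -- inclusion 1 : E ⊆ {x | x i0 < sp} ∪ G
  have hincl1 : E ⊆ {x | x i0 < sp} ∪ G := by
    intro x hx
    by_cases hxG : x ∈ G
    · exact Or.inr hxG
    left
    have hW : |∑ i, ((x i) ^ 2 - 1)| < (d : ℝ) * w := not_le.1 hxG
    have hWlt := (abs_lt.1 hW).1
    have hxE : x i0 + σb / (2 * (d:ℝ)) * (∑ i, (x i) ^ 2) < t d := hx
    rw [hsum_eq x, mul_add, had] at hxE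
    have hprod : -(δ / 4) < σb / (2 * (d:ℝ)) * (∑ i, ((x i) ^ 2 - 1)) := by
      have := mul_lt_mul_of_pos_left hWlt hapos
      rw [mul_neg, hadw] at this
      linarith
    show x i0 < sp
    rw [hsp]
    linarith
  -- inclusion 2 : {x | x i0 < sm} ⊆ E ∪ G
  have hincl2 : {x : Fin d → ℝ | x i0 < sm} ⊆ E ∪ G := by
    intro x hx
    by_cases hxG : x ∈ G
    · exact Or.inr hxG
    left
    have hW : |∑ i, ((x i) ^ 2 - 1)| < (d : ℝ) * w := not_le.1 hxG
    have hWlt := (abs_lt.1 hW).2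
    have hprod : σb / (2 * (d:ℝ)) * (∑ i, ((x i) ^ 2 - 1)) < δ / 4 := by
      have := mul_lt_mul_of_pos_left hWlt hapos
      rw [hadw] at this
      exact this
    show x i0 + σb / (2 * (d:ℝ)) * (∑ i, (x i) ^ 2) < t d
    rw [hsum_eq x, mul_add, had]
    have hx' : x i0 < sm := hx
    rw [hsm] at hx'
    linarith
  -- measure bounds
  have hEmeas : (μ E).toReal ≤ stdNormalCDF sp + (μ G).toReal := by
    have hle : μ E ≤ μ {x | x i0 < sp} + μ G :=
      le_trans (measure_mono hincl1) (measure_union_le _ _)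
    have := ENNReal.toReal_mono
      (ENNReal.add_ne_top.2 ⟨measure_ne_top _ _, measure_ne_top _ _⟩) hle
    rw [ENNReal.toReal_add (measure_ne_top _ _) (measure_ne_top _ _)] at this
    rw [gpi_coord_toReal i0 sp] at this
    exact this
  have hEmeas2 : stdNormalCDF sm - (μ G).toReal ≤ (μ E).toReal := by
    have hle : μ {x | x i0 < sm} ≤ μ E + μ G :=
      le_trans (measure_mono hincl2) (measure_union_le _ _)
    have := ENNReal.toReal_mono
      (ENNReal.add_ne_top.2 ⟨measure_ne_top _ _, measure_ne_top _ _⟩) hle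
    rw [ENNReal.toReal_add (measure_ne_top _ _) (measure_ne_top _ _)] at this
    rw [gpi_coord_toReal i0 sm] at this
    linarith
  -- CDF values near Φ L
  have hts : |t d - (-ρ / σb)| < δ / 4 := h1
  have hsp_close : dist sp L < δ := by
    rw [Real.dist_eq, hsp, hL]
    rw [abs_lt] at hts ⊢
    constructor <;> [linarith [hts.1]; linarith [hts.2]]
  have hsm_close : dist sm L < δ := by
    rw [Real.dist_eq, hsm, hL]
    rw [abs_lt] at hts ⊢
    constructor <;> [linarith [hts.1]; linarith [hts.2]]
  have hΦsp := hδ sp hsp_close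
  have hΦsm := hδ sm hsm_close
  rw [Real.dist_eq, abs_lt] at hΦsp hΦsm
  -- conclude
  rw [Real.dist_eq, abs_lt, hpe']
  have hGnonneg : 0 ≤ (μ G).toReal := ENNReal.toReal_nonneg
  constructor
  · linarith [hEmeas2, hΦsm.1, hGbound]
  · linarith [hEmeas, hΦsp.2, hGbound]
end
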